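/- arXiv:2311.13593 — 2 statements merged into one kernel-verified Lean document; each statement's English description precedes it below -/
import Mathlib

section
/- Let $\hat{W}$ be the Weyl group of a simply laced root system with simple reflections indexed by $I$, and let a finite group $G$ act on the Dynkin diagram (hence on $I$ and on $\hat{W}$ by permuting simple reflections and conjugation). Then the set of elements of $\hat{W}$ that preserve the fixed subspace $\mathfrak{h} = \hat{\mathfrak{h}}^G$ of the Cartan subalgebra is exactly the fixed subgroup $W = \hat{W}^G$. -/
namespace Stmt0Aux

variable {I : Type*} {H : Type*} [AddCommGroup H] [Module ℂ H]

/-- product of a word in the simple reflections -/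
def wp (s : I → (H ≃ₗ[ℂ] H)) (l : List I) : H ≃ₗ[ℂ] H := (l.map s).prod

variable {s : I → (H ≃ₗ[ℂ] H)}

lemma wp_nil : wp s [] = 1 := rfl

lemma wp_cons (k : I) (l : List I) : wp s (k :: l) = s k * wp s l := by
  simp [wp]

lemma wp_append (l l' : List I) : wp s (l ++ l') = wp s l * wp s l' := by
  simp [wp]

lemma wp_singleton (k : I) : wp s [k] = s k := by simp [wp]

/-- membership in the group generated by the `s i`, witnessed by a word -/
def InW (s : I → (H ≃ₗ[ℂ] H)) (w : H ≃ₗ[ℂ] H) : Prop := ∃ l : List I, wp s l = w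

/-- membership in the rank-2 subgroup -/
def InW2 (s : I → (H ≃ₗ[ℂ] H)) (i j : I) (t : H ≃ₗ[ℂ] H) : Prop :=
  ∃ l : List I, (∀ k ∈ l, k = i ∨ k = j) ∧ wp s l = t

/-- length -/
noncomputable def len (s : I → (H ≃ₗ[ℂ] H)) (w : H ≃ₗ[ℂ] H) : ℕ :=
  sInf {n | ∃ l : List I, wp s l = w ∧ l.length = n}

/-- rank-2 length -/
noncomputable def len2 (s : I → (H ≃ₗ[ℂ] H)) (i j : I) (t : H ≃ₗ[ℂ] H) : ℕ :=
  sInf {n | ∃ l : List I, (∀ k ∈ l, k = i ∨ k = j) ∧ wp s l = t ∧ l.length = n}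

lemma len_le {w : H ≃ₗ[ℂ] H} {l : List I} (h : wp s l = w) : len s w ≤ l.length :=
  Nat.sInf_le ⟨l, h, rfl⟩

lemma len2_le {i j : I} {t : H ≃ₗ[ℂ] H} {l : List I} (ha : ∀ k ∈ l, k = i ∨ k = j)
    (h : wp s l = t) : len2 s i j t ≤ l.length :=
  Nat.sInf_le ⟨l, ha, h, rfl⟩

lemma exists_min {w : H ≃ₗ[ℂ] H} (h : InW s w) :
    ∃ l : List I, wp s l = w ∧ l.length = len s w := by
  obtain ⟨l, hl⟩ := h
  have : len s w ∈ {n | ∃ l : List I, wp s l = w ∧ l.length = n} :=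
    Nat.sInf_mem ⟨l.length, l, hl, rfl⟩
  obtain ⟨l', h1, h2⟩ := this
  exact ⟨l', h1, h2⟩

lemma exists_min2 {i j : I} {t : H ≃ₗ[ℂ] H} (h : InW2 s i j t) :
    ∃ l : List I, (∀ k ∈ l, k = i ∨ k = j) ∧ wp s l = t ∧ l.length = len2 s i j t := by
  obtain ⟨l, ha, hl⟩ := h
  have : len2 s i j t ∈ {n | ∃ l : List I, (∀ k ∈ l, k = i ∨ k = j) ∧ wp s l = t ∧ l.length = n} :=
    Nat.sInf_mem ⟨l.length, l, ha, hl, rfl⟩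
  exact this

lemma InW2.inW {i j : I} {t : H ≃ₗ[ℂ] H} (h : InW2 s i j t) : InW s t := by
  obtain ⟨l, _, hl⟩ := h; exact ⟨l, hl⟩

/-- subadditivity against a rank-2 word -/
lemma len_mul_le {i j : I} {x y : H ≃ₗ[ℂ] H} (hx : InW s x) (hy : InW2 s i j y) :
    len s (x * y) ≤ len s x + len2 s i j y := by
  obtain ⟨lx, hlx, hlen⟩ := exists_min hx
  obtain ⟨ly, _, hly, hlen'⟩ := exists_min2 hy
  calc len s (x * y) ≤ (lx ++ ly).length := len_le (by rw [wp_append, hlx, hly])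
  _ = len s x + len2 s i j y := by simp [hlen, hlen']

lemma len2_mul_le_cons {i j : I} {t : H ≃ₗ[ℂ] H} (k : I) (hk : k = i ∨ k = j)
    (ht : InW2 s i j t) : len2 s i j (s k * t) ≤ len2 s i j t + 1 := by
  obtain ⟨l, ha, hl, hlen⟩ := exists_min2 ht
  have hwp : wp s (k :: l) = s k * t := by rw [wp_cons, hl]
  have halpha : ∀ k' ∈ (k :: l), k' = i ∨ k' = j := by
    intro k' hk'
    rcases List.mem_cons.1 hk' with rfl | h
    · exact hk
    · exact ha k' h
  have := len2_le halpha hwp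
  simpa [hlen] using this

lemma len2_mul_le_concat {i j : I} {t : H ≃ₗ[ℂ] H} (k : I) (hk : k = i ∨ k = j)
    (ht : InW2 s i j t) : len2 s i j (t * s k) ≤ len2 s i j t + 1 := by
  obtain ⟨l, ha, hl, hlen⟩ := exists_min2 ht
  have h2 : wp s (l ++ [k]) = t * s k := by rw [wp_append, hl, wp_singleton]
  calc len2 s i j (t * s k) ≤ (l ++ [k]).length := by
        refine len2_le ?_ h2
        intro k' hk'
        rcases List.mem_append.1 hk' with h | h
        · exact ha k' h
        · simp at h; exact h ▸ hk
  _ = len2 s i j t + 1 := by simp [hlen]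

lemma len_eq_zero {w : H ≃ₗ[ℂ] H} (h : InW s w) (h0 : len s w = 0) : w = 1 := by
  obtain ⟨l, hl, hlen⟩ := exists_min h
  rw [h0, List.length_eq_zero_iff] at hlen
  subst hlen; exact hl.symm

lemma len2_eq_zero {i j : I} {t : H ≃ₗ[ℂ] H} (h : InW2 s i j t) (h0 : len2 s i j t = 0) :
    t = 1 := by
  obtain ⟨l, _, hl, hlen⟩ := exists_min2 h
  rw [h0, List.length_eq_zero_iff] at hlen
  subst hlen; exact hl.symm

lemma one_le_len2 {i j : I} {t : H ≃ₗ[ℂ] H} (h : InW2 s i j t) (h1 : t ≠ 1) :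
    1 ≤ len2 s i j t := by
  by_contra hc
  exact h1 (len2_eq_zero h (by omega))

lemma two_le_len2 {i j : I} {t : H ≃ₗ[ℂ] H} (h : InW2 s i j t) (h1 : t ≠ 1)
    (hi : t ≠ s i) (hj : t ≠ s j) : 2 ≤ len2 s i j t := by
  by_contra hc
  obtain ⟨l, ha, hl, hlen⟩ := exists_min2 h
  have hn : l.length = 0 ∨ l.length = 1 := by omega
  rcases hn with hn | hn
  · exact h1 (len2_eq_zero h (by omega))
  · obtain ⟨k, rfl⟩ := List.length_eq_one_iff.1 hn
    rcases ha k (by simp) with rfl | rfl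
    · exact hi (by rw [← hl, wp_singleton])
    · exact hj (by rw [← hl, wp_singleton])

lemma three_le_len2 {i j : I} {t : H ≃ₗ[ℂ] H} (h : InW2 s i j t) (h1 : t ≠ 1)
    (hi : t ≠ s i) (hj : t ≠ s j) (hij : t ≠ s i * s j) (hji : t ≠ s j * s i)
    (hii : s i * s i = 1) (hjj : s j * s j = 1) : 3 ≤ len2 s i j t := by
  by_contra hc
  obtain ⟨l, ha, hl, hlen⟩ := exists_min2 h
  have h2 : 2 ≤ len2 s i j t := two_le_len2 h h1 hi hj
  have hlen2 : l.length = 2 := by omega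
  obtain ⟨k1, k2, rfl⟩ : ∃ k1 k2, l = [k1, k2] := by
    match l, hlen2 with
    | [k1, k2], _ => exact ⟨k1, k2, rfl⟩
  have hw : wp s [k1, k2] = s k1 * s k2 := by
    rw [show [k1,k2] = [k1] ++ [k2] from rfl, wp_append, wp_singleton, wp_singleton]
  rcases ha k1 (by simp) with rfl | rfl <;> rcases ha k2 (by simp) with rfl | rfl
  · exact h1 (by rw [← hl, hw, hii])
  · exact hij (by rw [← hl, hw])
  · exact hji (by rw [← hl, hw])
  · exact h1 (by rw [← hl, hw, hjj])


section Refl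

variable (α : Module.Basis I ℂ H) (B : LinearMap.BilinForm ℂ H)
variable {s : I → (H ≃ₗ[ℂ] H)}
variable (hs : ∀ i x, s i x = x - B x (α i) • α i)
variable (hdiag : ∀ i, B (α i) (α i) = 2)

include hs hdiag in
lemma s_invol (i : I) : s i * s i = 1 := by
  apply LinearEquiv.toLinearMap_injective
  apply LinearMap.ext
  intro x
  have : (s i * s i) x = x := by
    rw [show (s i * s i) x = s i (s i x) from rfl, hs, hs]
    simp only [map_sub, map_smul, LinearMap.sub_apply, LinearMap.smul_apply, smul_eq_mul, hdiag]
    module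
  simpa using this

include hs hdiag in
lemma s_apply_self (i : I) : s i (α i) = -α i := by
  rw [hs, hdiag]; module

include hs in
lemma s_apply_other {i j : I} (c : ℂ) (hc : B (α j) (α i) = c) : s i (α j) = α j - c • α i := by
  rw [hs, hc]

-- the commuting relation when B (α i) (α j) = 0
include hs hdiag in
lemma s_comm {i j : I} (hbij : B (α i) (α j) = 0) (hbji : B (α j) (α i) = 0) :
    s i * s j = s j * s i := by
  apply LinearEquiv.toLinearMap_injective
  apply LinearMap.ext
  intro x
  have : s i (s j x) = s j (s i x) := by
    rw [hs j x, hs i, hs i x, hs j]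
    simp only [map_sub, map_smul, LinearMap.sub_apply, LinearMap.smul_apply, smul_eq_mul,
      hdiag, hbij, hbji]
    module
  simpa using this

-- the braid relation when B (α i) (α j) = -1
include hs hdiag in
lemma s_braid {i j : I} (hbij : B (α i) (α j) = -1) (hbji : B (α j) (α i) = -1) :
    s i * s j * s i = s j * s i * s j := by
  apply LinearEquiv.toLinearMap_injective
  apply LinearMap.ext
  intro x
  have : s i (s j (s i x)) = s j (s i (s j x)) := by
    rw [hs i x, hs j, hs i, hs j x, hs i, hs j]
    simp only [map_sub, map_smul, LinearMap.sub_apply, LinearMap.smul_apply, smul_eq_mul,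
      hdiag, hbij, hbji]
    module
  simpa using this


/-- helper to distinguish vectors via coordinates -/
lemma vne (k : I) {v w : H} (h : α.repr v k ≠ α.repr w k) : v ≠ w :=
  fun he => h (he ▸ rfl)

section Rank2

variable {i j : I}
variable (hs : ∀ i x, s i x = x - B x (α i) • α i)
variable (hdiag : ∀ i, B (α i) (α i) = 2)

include hs hdiag in
lemma s_ne_one (k : I) : s k ≠ 1 := by
  intro he
  have h1 : s k (α k) = α k := by rw [he]; rfl
  rw [s_apply_self α B hs hdiag k] at h1
  refine vne α k ?_ h1
  simp only [map_neg, Module.Basis.repr_self, Finsupp.single_eq_same]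
  intro hc
  have : (-1 : ℂ) = 1 := by simpa using hc
  norm_num at this

include hs hdiag in
/-- enumeration of the rank-2 group, commuting case -/
lemma enum0 (hbij : B (α i) (α j) = 0) (hbji : B (α j) (α i) = 0) :
    ∀ l : List I, (∀ k ∈ l, k = i ∨ k = j) →
      wp s l = 1 ∨ wp s l = s i ∨ wp s l = s j ∨ wp s l = s i * s j := by
  have haa := s_invol α B hs hdiag i
  have hbb := s_invol α B hs hdiag j
  have hcomm : s j * s i = s i * s j := (s_comm α B hs hdiag hbij hbji).symm
  have xaa : ∀ x : H ≃ₗ[ℂ] H, x * s i * s i = x := by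
    intro x; rw [mul_assoc, haa, mul_one]
  have xbb : ∀ x : H ≃ₗ[ℂ] H, x * s j * s j = x := by
    intro x; rw [mul_assoc, hbb, mul_one]
  intro l hl
  induction l with
  | nil => left; rfl
  | cons k l ih =>
    have h1 := ih (fun k' hk' => hl k' (List.mem_cons_of_mem _ hk'))
    have hk := hl k List.mem_cons_self
    rw [wp_cons]
    rcases hk with rfl | rfl <;> rcases h1 with h|h|h|h <;> rw [h] <;>
      simp only [← mul_assoc, haa, hbb, hcomm, xaa, xbb, one_mul, mul_one] <;> tauto

include hs hdiag in
set_option maxHeartbeats 1000000 in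
/-- enumeration of the rank-2 group, braid case -/
lemma enum1 (hbij : B (α i) (α j) = -1) (hbji : B (α j) (α i) = -1) :
    ∀ l : List I, (∀ k ∈ l, k = i ∨ k = j) →
      wp s l = 1 ∨ wp s l = s i ∨ wp s l = s j ∨ wp s l = s i * s j ∨
        wp s l = s j * s i ∨ wp s l = s i * s j * s i := by
  have haa := s_invol α B hs hdiag i
  have hbb := s_invol α B hs hdiag j
  have hbraid : s j * s i * s j = s i * s j * s i := (s_braid α B hs hdiag hbij hbji).symm
  have xaa : ∀ x : H ≃ₗ[ℂ] H, x * s i * s i = x := by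
    intro x; rw [mul_assoc, haa, mul_one]
  have xbb : ∀ x : H ≃ₗ[ℂ] H, x * s j * s j = x := by
    intro x; rw [mul_assoc, hbb, mul_one]
  intro l hl
  induction l with
  | nil => left; rfl
  | cons k l ih =>
    have h1 := ih (fun k' hk' => hl k' (List.mem_cons_of_mem _ hk'))
    have hk := hl k List.mem_cons_self
    rw [wp_cons]
    rcases hk with rfl | rfl <;> rcases h1 with h|h|h|h|h|h <;> rw [h] <;>
      simp only [← mul_assoc, haa, hbb, hbraid, xaa, xbb, one_mul, mul_one] <;> tauto


lemma equiv_ne_of_apply_ne {u v : H ≃ₗ[ℂ] H} (x : H) (h : u x ≠ v x) : u ≠ v :=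
  fun he => h (by rw [he])

include hs hdiag in
set_option maxHeartbeats 1000000 in
lemma rank2 (hij : i ≠ j) (hb : B (α i) (α j) = 0 ∨ B (α i) (α j) = -1)
    (hsymm : B (α j) (α i) = B (α i) (α j))
    {t : H ≃ₗ[ℂ] H} (ht : InW2 s i j t)
    (hlen : len2 s i j t ≤ len2 s i j (t * s i)) :
    t (α i) = α i ∨ t (α i) = α j ∨ t (α i) = α i + α j := by
  have haa := s_invol α B hs hdiag i
  have hbb := s_invol α B hs hdiag j
  have hai := s_apply_self α B hs hdiag i
  have hbj := s_apply_self α B hs hdiag j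
  have hane : s i ≠ (1 : H ≃ₗ[ℂ] H) := s_ne_one α B hs hdiag i
  have l1 : len2 s i j (1 : H ≃ₗ[ℂ] H) = 0 :=
    Nat.le_zero.mp (len2_le (l := []) (by simp) rfl)
  have lb : len2 s i j (s j) ≤ 1 := len2_le (l := [j]) (by simp) (wp_singleton j)
  have hwp2 : wp s [i, j] = s i * s j := by simp [wp]
  have lab : len2 s i j (s i * s j) ≤ 2 := len2_le (l := [i, j]) (by simp) hwp2
  have wa : InW2 s i j (s i) := ⟨[i], by simp, wp_singleton i⟩
  have wab : InW2 s i j (s i * s j) := ⟨[i, j], by simp, hwp2⟩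
  have wba : InW2 s i j (s j * s i) := ⟨[j, i], by simp, by simp [wp]⟩
  have waba : InW2 s i j (s i * s j * s i) := ⟨[i, j, i], by simp, by simp [wp, mul_assoc]⟩
  have caseA : t = s i → False := by
    intro h
    rw [h, haa, l1, Nat.le_zero] at hlen
    exact hane (len2_eq_zero wa hlen)
  rcases hb with hb0 | hb1
  · -- commuting case
    have hbji : B (α j) (α i) = 0 := hsymm.trans hb0
    have hcomm := s_comm α B hs hdiag hb0 hbji
    have hbi : s j (α i) = α i := by rw [hs, hb0]; module
    have haj : s i (α j) = α j := by rw [hs, hbji]; module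
    have habi : (s i * s j) (α i) = -α i := by
      show s i (s j (α i)) = -α i
      rw [hbi, hai]
    have habj : (s i * s j) (α j) = -α j := by
      show s i (s j (α j)) = -α j
      rw [hbj, map_neg, haj]
    obtain ⟨l, hal, hlt⟩ := ht
    rcases enum0 α B hs hdiag hb0 hbji l hal with h|h|h|h <;> rw [hlt] at h
    · rw [h]; left; rfl
    · exact absurd h caseA
    · rw [h, hbi]; left; rfl
    · exfalso
      have habne1 : (s i * s j : H ≃ₗ[ℂ] H) ≠ 1 := by
        refine equiv_ne_of_apply_ne (α i) ?_
        rw [habi, show (1 : H ≃ₗ[ℂ] H) (α i) = α i from rfl]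
        intro hc
        have hco := congrArg (fun v => α.repr v i) hc
        norm_num [Finsupp.single_apply, hij, hij.symm] at hco
      have habnea : (s i * s j : H ≃ₗ[ℂ] H) ≠ s i := by
        refine equiv_ne_of_apply_ne (α j) ?_
        rw [habj, haj]
        intro hc
        have hco := congrArg (fun v => α.repr v j) hc
        norm_num [Finsupp.single_apply, hij, hij.symm] at hco
      have habneb : (s i * s j : H ≃ₗ[ℂ] H) ≠ s j := by
        refine equiv_ne_of_apply_ne (α i) ?_
        rw [habi, hbi]
        intro hc
        have hco := congrArg (fun v => α.repr v i) hc
        norm_num [Finsupp.single_apply, hij, hij.symm] at hco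
      have h2 : 2 ≤ len2 s i j (s i * s j) := two_le_len2 wab habne1 habnea habneb
      have hred : (s i * s j) * s i = s j := by
        rw [mul_assoc, ← hcomm, ← mul_assoc, haa, one_mul]
      rw [h, hred] at hlen
      omega
  · -- braid case
    have hbji : B (α j) (α i) = -1 := hsymm.trans hb1
    have hbi : s j (α i) = α i + α j := by rw [hs, hb1]; module
    have haj : s i (α j) = α j + α i := by rw [hs, hbji]; module
    have habi : (s i * s j) (α i) = α j := by
      show s i (s j (α i)) = α j
      rw [hbi, map_add, hai, haj]; module
    have hbai : (s j * s i) (α i) = -α i - α j := by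
      show s j (s i (α i)) = -α i - α j
      rw [hai, map_neg, hbi]; module
    have habai : (s i * s j * s i) (α i) = -α j := by
      show s i (s j (s i (α i))) = -α j
      rw [hai, map_neg, hbi, map_neg, map_add, hai, haj]; module
    obtain ⟨l, hal, hlt⟩ := ht
    rcases enum1 α B hs hdiag hb1 hbji l hal with h|h|h|h|h|h <;> rw [hlt] at h
    · rw [h]; left; rfl
    · exact absurd h caseA
    · rw [h, hbi]; right; right; rfl
    · rw [h, habi]; right; left; rfl
    · exfalso
      have hb1' : (s j * s i : H ≃ₗ[ℂ] H) ≠ 1 := by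
        refine equiv_ne_of_apply_ne (α i) ?_
        rw [hbai, show (1 : H ≃ₗ[ℂ] H) (α i) = α i from rfl]
        intro hc
        have hco := congrArg (fun v => α.repr v i) hc
        norm_num [Finsupp.single_apply, hij, hij.symm] at hco
      have hba' : (s j * s i : H ≃ₗ[ℂ] H) ≠ s i := by
        refine equiv_ne_of_apply_ne (α i) ?_
        rw [hbai, hai]
        intro hc
        have hco := congrArg (fun v => α.repr v j) hc
        norm_num [Finsupp.single_apply, hij, hij.symm] at hco
      have hbb' : (s j * s i : H ≃ₗ[ℂ] H) ≠ s j := by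
        refine equiv_ne_of_apply_ne (α i) ?_
        rw [hbai, hbi]
        intro hc
        have hco := congrArg (fun v => α.repr v i) hc
        norm_num [Finsupp.single_apply, hij, hij.symm] at hco
      have h2 : 2 ≤ len2 s i j (s j * s i) := two_le_len2 wba hb1' hba' hbb'
      have hred : (s j * s i) * s i = s j := by rw [mul_assoc, haa, mul_one]
      rw [h, hred] at hlen
      omega
    · exfalso
      have d1 : (s i * s j * s i : H ≃ₗ[ℂ] H) ≠ 1 := by
        refine equiv_ne_of_apply_ne (α i) ?_
        rw [habai, show (1 : H ≃ₗ[ℂ] H) (α i) = α i from rfl]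
        intro hc
        have hco := congrArg (fun v => α.repr v j) hc
        norm_num [Finsupp.single_apply, hij, hij.symm] at hco
      have d2 : (s i * s j * s i : H ≃ₗ[ℂ] H) ≠ s i := by
        refine equiv_ne_of_apply_ne (α i) ?_
        rw [habai, hai]
        intro hc
        have hco := congrArg (fun v => α.repr v j) hc
        norm_num [Finsupp.single_apply, hij, hij.symm] at hco
      have d3 : (s i * s j * s i : H ≃ₗ[ℂ] H) ≠ s j := by
        refine equiv_ne_of_apply_ne (α i) ?_
        rw [habai, hbi]
        intro hc
        have hco := congrArg (fun v => α.repr v j) hc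
        norm_num [Finsupp.single_apply, hij, hij.symm] at hco
      have d4 : (s i * s j * s i : H ≃ₗ[ℂ] H) ≠ s i * s j := by
        refine equiv_ne_of_apply_ne (α i) ?_
        rw [habai, habi]
        intro hc
        have hco := congrArg (fun v => α.repr v j) hc
        norm_num [Finsupp.single_apply, hij, hij.symm] at hco
      have d5 : (s i * s j * s i : H ≃ₗ[ℂ] H) ≠ s j * s i := by
        refine equiv_ne_of_apply_ne (α i) ?_
        rw [habai, hbai]
        intro hc
        have hco := congrArg (fun v => α.repr v i) hc
        norm_num [Finsupp.single_apply, hij, hij.symm] at hco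
      have h3 : 3 ≤ len2 s i j (s i * s j * s i) :=
        three_le_len2 waba d1 d2 d3 d4 d5 haa hbb
      have hred : (s i * s j * s i) * s i = s i * s j := by rw [mul_assoc, haa, mul_one]
      rw [h, hred] at hlen
      omega

end Rank2


include hs hdiag in
lemma s_inv (k : I) : (s k)⁻¹ = s k :=
  inv_eq_of_mul_eq_one_left (s_invol α B hs hdiag k)

end Refl

/-- positivity of coordinates -/
def Pos (α : Module.Basis I ℂ H) (v : H) : Prop :=
  ∀ k, 0 ≤ (α.repr v k).re ∧ (α.repr v k).im = 0

lemma pos_basis (α : Module.Basis I ℂ H) (i : I) : Pos α (α i) := by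
  intro k
  rw [Module.Basis.repr_self]
  by_cases h : i = k
  · subst h; rw [Finsupp.single_eq_same]; norm_num
  · rw [Finsupp.single_eq_of_ne (Ne.symm h)]; norm_num

lemma pos_add (α : Module.Basis I ℂ H) {v w : H} (hv : Pos α v) (hw : Pos α w) :
    Pos α (v + w) := by
  intro k
  rw [map_add, Finsupp.add_apply]
  obtain ⟨h1, h2⟩ := hv k
  obtain ⟨h3, h4⟩ := hw k
  constructor
  · rw [Complex.add_re]; linarith
  · rw [Complex.add_im, h2, h4]; ring

section MainT

variable (α : Module.Basis I ℂ H) (B : LinearMap.BilinForm ℂ H)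
variable {s : I → (H ≃ₗ[ℂ] H)}
variable (hs : ∀ i x, s i x = x - B x (α i) • α i)
variable (hdiag : ∀ i, B (α i) (α i) = 2)
variable (hBsymm : ∀ x y : H, B x y = B y x)
variable (hoff : ∀ i j, i ≠ j → B (α i) (α j) = 0 ∨ B (α i) (α j) = -1)

include hs hdiag hBsymm hoff in
set_option maxHeartbeats 1000000 in
/-- the key theorem: if `len (w * s i) ≥ len w` then `w (α i)` is a nonnegative
combination of simple roots -/
theorem posT : ∀ n (w : H ≃ₗ[ℂ] H), InW s w → len s w = n →
    ∀ i, len s w ≤ len s (w * s i) → Pos α (w (α i)) := by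
  intro n
  induction n using Nat.strong_induction_on with
  | _ n IH =>
  intro w hw hlw i hi
  rcases Nat.eq_zero_or_pos n with h0 | hposn
  · have hw1 : w = 1 := len_eq_zero hw (by omega)
    rw [hw1]
    exact pos_basis α i
  · obtain ⟨u, hu, hulen⟩ := exists_min hw
    have hne : u ≠ [] := by
      intro h; rw [h] at hulen; simp at hulen; omega
    obtain ⟨u', j, rfl⟩ : ∃ u' j, u = u' ++ [j] :=
      ⟨u.dropLast, u.getLast hne, (List.dropLast_append_getLast hne).symm⟩
    have hwsj : w * s j = wp s u' := by
      rw [wp_append, wp_singleton] at hu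
      rw [← hu, mul_assoc, s_invol α B hs hdiag, mul_one]
    have hu'len : u'.length = n - 1 := by
      rw [List.length_append] at hulen; simp at hulen; omega
    have hlwsj : len s (w * s j) ≤ n - 1 := by
      rw [hwsj, ← hu'len]; exact len_le rfl
    have hij : i ≠ j := by
      intro he
      rw [he] at hi
      omega
    -- the set A of Humphreys' argument
    set Acond : (H ≃ₗ[ℂ] H) → Prop := fun v =>
      InW s v ∧ InW2 s i j (v⁻¹ * w) ∧ len s w = len s v + len2 s i j (v⁻¹ * w)
      with hAcond
    have hel : (w * s j)⁻¹ * w = s j := by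
      rw [mul_inv_rev, mul_assoc, inv_mul_cancel, mul_one, s_inv α B hs hdiag]
    have hwsjW : InW s (w * s j) := ⟨u', hwsj.symm⟩
    have hAwsj : Acond (w * s j) := by
      refine ⟨hwsjW, by rw [hel]; exact ⟨[j], by simp, wp_singleton j⟩, ?_⟩
      rw [hel]
      have c1 : len s w ≤ len s (w * s j) + len2 s i j (s j) := by
        have h' := len_mul_le (i := i) (j := j) hwsjW ⟨[j], by simp, wp_singleton j⟩
        rw [mul_assoc, s_invol α B hs hdiag, mul_one] at h'
        exact h'
      have c2 : len2 s i j (s j) ≤ 1 := len2_le (l := [j]) (by simp) (wp_singleton j)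
      omega
    set S := {m | ∃ v, Acond v ∧ len s v = m} with hSdef
    have hS : S.Nonempty := ⟨len s (w * s j), w * s j, hAwsj, rfl⟩
    obtain ⟨v, hvA, hvm⟩ := Nat.sInf_mem hS
    have hmin : ∀ v', Acond v' → sInf S ≤ len s v' := fun v' h => Nat.sInf_le ⟨v', h, rfl⟩
    obtain ⟨hvW, hvt2, hvlen⟩ := hvA
    set t := v⁻¹ * w with hts
    have hvt : v * t = w := mul_inv_cancel_left v w
    have hvlt : len s v < n := by
      have := hmin _ hAwsj
      omega
    -- both `s i` and `s j` increase the length of `v`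
    have hclaim : ∀ k, k = i ∨ k = j → len s v ≤ len s (v * s k) := by
      intro k hk
      by_contra hc
      push_neg at hc
      have hskinv : (v * s k)⁻¹ * w = s k * t := by
        rw [mul_inv_rev, mul_assoc, s_inv α B hs hdiag, hts]
      have hvskW : InW s (v * s k) := by
        obtain ⟨lv, hlv⟩ := hvW
        exact ⟨lv ++ [k], by rw [wp_append, wp_singleton, hlv]⟩
      have hW2 : InW2 s i j (s k * t) := by
        obtain ⟨lt, halt, hlt⟩ := hvt2
        refine ⟨k :: lt, ?_, by rw [wp_cons, hlt]⟩
        intro k' hk'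
        rcases List.mem_cons.1 hk' with rfl | h'
        · exact hk
        · exact halt k' h'
      have hlcons : len2 s i j (s k * t) ≤ len2 s i j t + 1 := len2_mul_le_cons k hk hvt2
      have hsub : len s w ≤ len s (v * s k) + len2 s i j (s k * t) := by
        have h' := len_mul_le hvskW hW2
        rw [show (v * s k) * (s k * t) = w from by
          rw [← mul_assoc, mul_assoc v, s_invol α B hs hdiag, mul_one, hvt]] at h'
        exact h'
      have hA' : Acond (v * s k) := by
        refine ⟨hvskW, by rw [hskinv]; exact hW2, ?_⟩
        rw [hskinv]
        omega
      have := hmin _ hA'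
      omega
    have hPi : Pos α (v (α i)) := IH (len s v) hvlt v hvW rfl i (hclaim i (Or.inl rfl))
    have hPj : Pos α (v (α j)) := IH (len s v) hvlt v hvW rfl j (hclaim j (Or.inr rfl))
    have ht3 : len2 s i j t ≤ len2 s i j (t * s i) := by
      by_contra hc
      push_neg at hc
      have hconc : InW2 s i j (t * s i) := by
        obtain ⟨lt, halt, hlt⟩ := hvt2
        refine ⟨lt ++ [i], ?_, by rw [wp_append, wp_singleton, hlt]⟩
        intro k' hk'
        rcases List.mem_append.1 hk' with h' | h'
        · exact halt k' h'
        · simp at h'; exact Or.inl h'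
      have h' := len_mul_le hvW hconc
      rw [show v * (t * s i) = w * s i from by rw [← mul_assoc, hvt]] at h'
      omega
    have hr2 := rank2 α B hs hdiag hij (hoff i j hij) (hBsymm (α j) (α i)) hvt2 ht3
    have hw_eq : w (α i) = v (t (α i)) := by rw [← hvt]; rfl
    rcases hr2 with h|h|h <;> rw [hw_eq, h]
    · exact hPi
    · exact hPj
    · rw [map_add]; exact pos_add α hPi hPj


include hs hdiag hBsymm in
lemma B_s (k : I) (x y : H) : B (s k x) (s k y) = B x y := by
  rw [hs k x, hs k y]
  simp only [map_sub, map_smul, LinearMap.sub_apply, LinearMap.smul_apply, smul_eq_mul,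
    hdiag, hBsymm (α k) y]
  ring

include hs hdiag hBsymm in
lemma B_wp : ∀ (l : List I) (x y : H), B (wp s l x) (wp s l y) = B x y := by
  intro l
  induction l with
  | nil => intro x y; rfl
  | cons k l ih =>
    intro x y
    have h1 : wp s (k :: l) x = s k (wp s l x) := by rw [wp_cons]; rfl
    have h2 : wp s (k :: l) y = s k (wp s l y) := by rw [wp_cons]; rfl
    rw [h1, h2, B_s α B hs hdiag hBsymm, ih]

include hs hdiag in
lemma wp_reverse : ∀ l : List I, (wp s l)⁻¹ = wp s l.reverse := by
  intro l
  induction l with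
  | nil => simp [wp_nil]
  | cons k l ih =>
    rw [wp_cons, mul_inv_rev, ih, s_inv α B hs hdiag, List.reverse_cons, wp_append,
      wp_singleton]

include hs hdiag in
lemma InW_of_mem {W : Subgroup (H ≃ₗ[ℂ] H)} (hW : W = Subgroup.closure (Set.range s))
    {w : H ≃ₗ[ℂ] H} (hw : w ∈ W) : InW s w := by
  rw [hW] at hw
  refine Subgroup.closure_induction ?_ ⟨[], rfl⟩
    (fun a b _ _ ⟨la, hla⟩ ⟨lb, hlb⟩ => ⟨la ++ lb, by rw [wp_append, hla, hlb]⟩)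
    (fun a _ ⟨la, hla⟩ => ⟨la.reverse, by rw [← wp_reverse α B hs hdiag, hla]⟩) hw
  rintro g ⟨i, rfl⟩
  exact ⟨[i], wp_singleton i⟩

include hs hdiag hBsymm hoff in
lemma neg_desc {u : H ≃ₗ[ℂ] H} (hu : InW s u) {j : I}
    (hd : len s (u * s j) < len s u) : Pos α (-(u (α j))) := by
  have hW' : InW s (u * s j) := by
    obtain ⟨l, hl⟩ := hu
    exact ⟨l ++ [j], by rw [wp_append, wp_singleton, hl]⟩
  have hre : (u * s j) * s j = u := by rw [mul_assoc, s_invol α B hs hdiag, mul_one]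
  have hp := posT α B hs hdiag hBsymm hoff (len s (u * s j)) (u * s j) hW' rfl j
    (by rw [hre]; omega)
  have heq : (u * s j) (α j) = -(u (α j)) := by
    show u (s j (α j)) = -(u (α j))
    rw [s_apply_self α B hs hdiag, map_neg]
  rwa [heq] at hp

lemma pos_pair [Fintype I] (x : H) (hx : ∀ k, B x (α k) = 1) {v : H} (hv : Pos α v) :
    0 ≤ (B x v).re := by
  have hv' : B x v = ∑ k, α.repr v k := by
    conv_lhs => rw [← α.sum_repr v]
    rw [map_sum]
    refine Finset.sum_congr rfl fun k _ => ?_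
    rw [map_smul, smul_eq_mul, hx, mul_one]
  rw [hv', Complex.re_sum]
  exact Finset.sum_nonneg fun k _ => (hv k).1

include hs hdiag hBsymm hoff in
/-- the key lemma: an element of the Weyl group fixing a regular dominant vector is trivial -/
lemma KL [Fintype I] (x : H) (hx : ∀ k, B x (α k) = 1)
    {u : H ≃ₗ[ℂ] H} (hu : InW s u) (hux : u x = x) : u = 1 := by
  by_contra hne
  obtain ⟨l, hl, hlen⟩ := exists_min hu
  have h1 : l ≠ [] := by
    intro h; apply hne; rw [← hl, h]; rfl
  obtain ⟨l', j, rfl⟩ : ∃ l' j, l = l' ++ [j] :=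
    ⟨l.dropLast, l.getLast h1, (List.dropLast_append_getLast h1).symm⟩
  have husj : u * s j = wp s l' := by
    rw [wp_append, wp_singleton] at hl
    rw [← hl, mul_assoc, s_invol α B hs hdiag, mul_one]
  have hd : len s (u * s j) < len s u := by
    have h2 : len s (u * s j) ≤ l'.length := by rw [husj]; exact len_le rfl
    rw [List.length_append] at hlen
    simp at hlen
    omega
  have hpos := neg_desc α B hs hdiag hBsymm hoff hu hd
  have hBval : B x (u (α j)) = 1 := by
    have hB := B_wp α B hs hdiag hBsymm (l' ++ [j]) x (α j)
    rw [hl, hux, hx j] at hB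
    exact hB
  have h0 := pos_pair α B x hx hpos
  rw [map_neg, hBval] at h0
  norm_num at h0


include hs hdiag in
set_option maxHeartbeats 1000000 in
/-- existence of a vector pairing to `1` with every simple root, via nondegeneracy
of `B` obtained from an averaged Hermitian inner product -/
lemma exists_dual [Fintype I] {W : Subgroup (H ≃ₗ[ℂ] H)}
    (hW : W = Subgroup.closure (Set.range s)) (hWfin : Finite W) :
    ∃ y : H, ∀ k, B y (α k) = 1 := by
  classical
  letI : Fintype ↥W := Fintype.ofFinite _
  set base : H → H → ℂ := fun z y => ∑ k, (starRingEnd ℂ) (α.repr z k) * α.repr y k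
    with hbase
  set F : H → H → ℂ := fun z y => ∑ uw : ↥W, base ((uw : H ≃ₗ[ℂ] H) z) ((uw : H ≃ₗ[ℂ] H) y)
    with hF
  have hsW : ∀ k, s k ∈ W := fun k => hW ▸ Subgroup.subset_closure ⟨k, rfl⟩
  have Finv : ∀ w0 ∈ W, ∀ z y, F (w0 z) (w0 y) = F z y := by
    intro w0 hw0 z y
    have key : ∀ uw : ↥W, base ((uw : H ≃ₗ[ℂ] H) (w0 z)) ((uw : H ≃ₗ[ℂ] H) (w0 y)) =
        (fun uv : ↥W => base ((uv : H ≃ₗ[ℂ] H) z) ((uv : H ≃ₗ[ℂ] H) y))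
          (uw * ⟨w0, hw0⟩) := fun uw => rfl
    calc F (w0 z) (w0 y)
        = ∑ uw : ↥W, (fun uv : ↥W => base ((uv : H ≃ₗ[ℂ] H) z) ((uv : H ≃ₗ[ℂ] H) y))
            ((Equiv.mulRight (⟨w0, hw0⟩ : ↥W)) uw) := by
              rw [hF]; exact Finset.sum_congr rfl fun uw _ => key uw
      _ = ∑ uv : ↥W, (fun uv : ↥W => base ((uv : H ≃ₗ[ℂ] H) z) ((uv : H ≃ₗ[ℂ] H) y)) uv := by
            exact Equiv.sum_comp (Equiv.mulRight (⟨w0, hw0⟩ : ↥W))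
              (fun uv : ↥W => base ((uv : H ≃ₗ[ℂ] H) z) ((uv : H ≃ₗ[ℂ] H) y))
      _ = F z y := rfl
  have FnegL : ∀ z y, F (-z) y = -F z y := by
    intro z y
    show (∑ uw : ↥W, base ((uw : H ≃ₗ[ℂ] H) (-z)) ((uw : H ≃ₗ[ℂ] H) y)) =
      -(∑ uw : ↥W, base ((uw : H ≃ₗ[ℂ] H) z) ((uw : H ≃ₗ[ℂ] H) y))
    rw [← Finset.sum_neg_distrib]
    refine Finset.sum_congr rfl fun uw _ => ?_
    simp only [hbase, map_neg, Finsupp.neg_apply, neg_mul, Finset.sum_neg_distrib]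
  have orth : ∀ k (y : H), B y (α k) = 0 → F (α k) y = 0 := by
    intro k y h0
    have skey : s k y = y := by rw [hs, h0, zero_smul, sub_zero]
    have h1 := Finv (s k) (hsW k) (α k) y
    rw [s_apply_self α B hs hdiag, skey, FnegL] at h1
    linear_combination (-1/2 : ℂ) * h1
  -- conjugate-linearity of `F` in the first argument over the basis
  have FbasisL : ∀ z y : H, F z y = ∑ k, (starRingEnd ℂ) (α.repr z k) * F (α k) y := by
    intro z y
    have hz : ∀ uw : ↥W, (uw : H ≃ₗ[ℂ] H) z = ∑ k, α.repr z k • (uw : H ≃ₗ[ℂ] H) (α k) := by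
      intro uw
      conv_lhs => rw [← α.sum_repr z]
      rw [map_sum]
      exact Finset.sum_congr rfl fun k _ => by rw [map_smul]
    rw [hF]
    have hterm : ∀ uw : ↥W,
        base ((uw : H ≃ₗ[ℂ] H) z) ((uw : H ≃ₗ[ℂ] H) y) =
        ∑ k, (starRingEnd ℂ) (α.repr z k) *
          base ((uw : H ≃ₗ[ℂ] H) (α k)) ((uw : H ≃ₗ[ℂ] H) y) := by
      intro uw
      rw [hz uw]
      simp only [hbase, map_sum, map_smul, Finsupp.coe_smul, Finsupp.smul_apply, smul_eq_mul,
        Finsupp.finset_sum_apply, Finset.sum_apply', map_mul, Finset.sum_mul, Finset.mul_sum]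
      rw [Finset.sum_comm]
      exact Finset.sum_congr rfl fun k _ => Finset.sum_congr rfl fun m _ => by ring
    calc F z y = ∑ uw : ↥W, base ((uw : H ≃ₗ[ℂ] H) z) ((uw : H ≃ₗ[ℂ] H) y) := by rw [hF]
      _ = ∑ uw : ↥W, ∑ k, (starRingEnd ℂ) (α.repr z k) *
            base ((uw : H ≃ₗ[ℂ] H) (α k)) ((uw : H ≃ₗ[ℂ] H) y) :=
          Finset.sum_congr rfl fun uw _ => hterm uw
      _ = ∑ k, ∑ uw : ↥W, (starRingEnd ℂ) (α.repr z k) *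
            base ((uw : H ≃ₗ[ℂ] H) (α k)) ((uw : H ≃ₗ[ℂ] H) y) := Finset.sum_comm
      _ = ∑ k, (starRingEnd ℂ) (α.repr z k) * F (α k) y := by
          refine Finset.sum_congr rfl fun k _ => ?_
          rw [← Finset.mul_sum]
  -- positive definiteness
  have Fdef : ∀ z : H, F z z = 0 → z = 0 := by
    intro z hz
    have hcast : F z z =
        ((∑ uw : ↥W, ∑ k, Complex.normSq (α.repr ((uw : H ≃ₗ[ℂ] H) z) k) : ℝ) : ℂ) := by
      push_cast
      show (∑ uw : ↥W, base ((uw : H ≃ₗ[ℂ] H) z) ((uw : H ≃ₗ[ℂ] H) z)) = _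
      refine Finset.sum_congr rfl fun uw _ => ?_
      simp only [hbase]
      exact Finset.sum_congr rfl fun k _ => Complex.normSq_eq_conj_mul_self.symm
    rw [hcast] at hz
    have hreal : (∑ uw : ↥W, ∑ k, Complex.normSq (α.repr ((uw : H ≃ₗ[ℂ] H) z) k)) = 0 :=
      Complex.ofReal_eq_zero.mp hz
    have hnn : ∀ uw : ↥W, uw ∈ Finset.univ →
        0 ≤ ∑ k, Complex.normSq (α.repr ((uw : H ≃ₗ[ℂ] H) z) k) :=
      fun uw _ => Finset.sum_nonneg fun k _ => Complex.normSq_nonneg _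
    have h1 := (Finset.sum_eq_zero_iff_of_nonneg hnn).mp hreal
      (⟨1, one_mem W⟩ : ↥W) (Finset.mem_univ _)
    have h2 : ∀ k : I, k ∈ Finset.univ → Complex.normSq (α.repr z k) = 0 := by
      have hnn2 : ∀ k : I, k ∈ Finset.univ → 0 ≤ Complex.normSq (α.repr z k) :=
        fun k _ => Complex.normSq_nonneg _
      have h1' : ∑ k, Complex.normSq (α.repr z k) = 0 := by
        have : ((⟨1, one_mem W⟩ : ↥W) : H ≃ₗ[ℂ] H) z = z := rfl
        rwa [this] at h1
      exact (Finset.sum_eq_zero_iff_of_nonneg hnn2).mp h1'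
    have h3 : α.repr z = 0 := by
      ext k
      exact Complex.normSq_eq_zero.mp (h2 k (Finset.mem_univ k))
    exact (LinearEquiv.map_eq_zero_iff α.repr).mp h3
  -- the linear map and its injectivity
  set φ : H →ₗ[ℂ] (I → ℂ) := LinearMap.pi (fun k => B.flip (α k)) with hφ
  have hker : ∀ z, φ z = 0 → z = 0 := by
    intro z hz
    have hz' : ∀ k, B z (α k) = 0 := by
      intro k
      have := congrFun hz k
      simpa [hφ, LinearMap.pi_apply, LinearMap.flip_apply] using this
    have hFz : ∀ k, F (α k) z = 0 := fun k => orth k z (hz' k)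
    have : F z z = 0 := by
      rw [FbasisL]
      exact Finset.sum_eq_zero fun k _ => by rw [hFz k, mul_zero]
    exact Fdef z this
  have hinj : Function.Injective φ := (injective_iff_map_eq_zero φ).mpr hker
  have hsurj : Function.Surjective φ := by
    haveI : Module.Finite ℂ H := Module.Finite.of_basis α
    have h1 : Module.finrank ℂ H = Fintype.card I := Module.finrank_eq_card_basis α
    have h2 : Module.finrank ℂ (I → ℂ) = Fintype.card I := by simp [Module.finrank_pi]
    exact (LinearMap.injective_iff_surjective_of_finrank_eq_finrank (by rw [h1, h2])).mp hinj
  obtain ⟨y, hy⟩ := hsurj (fun _ => 1)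
  refine ⟨y, fun k => ?_⟩
  have := congrFun hy k
  simpa [hφ, LinearMap.pi_apply, LinearMap.flip_apply] using this

end MainT

end Stmt0Aux


/-- Let `Ŵ` (here `W`) be the Weyl group of a simply laced root system with
simple roots `α i` forming a basis of the Cartan subalgebra `H`, and let a finite group `G`
act on the Dynkin diagram (hence on the index set `I`, on `H` by permuting the simple roots via
`P`, and on `W` by conjugation).  Then an element `w ∈ W` preserves the fixed subspace
`𝔥 = H^G` if and only if `w` is fixed by the conjugation action of `G`, i.e. the set of
elements of `W` preserving `H^G` is exactly `W^G`. -/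
theorem stmt0
    {I : Type*} [Fintype I] {H : Type*} [AddCommGroup H] [Module ℂ H]
    (α : Module.Basis I ℂ H)                      -- the simple roots
    (B : LinearMap.BilinForm ℂ H)          -- the invariant inner product (Killing form)
    (hBsymm : ∀ x y : H, B x y = B y x)
    (hdiag : ∀ i, B (α i) (α i) = 2)       -- simply laced normalization
    (hoff : ∀ i j, i ≠ j → B (α i) (α j) = 0 ∨ B (α i) (α j) = -1)  -- simply laced
    (s : I → (H ≃ₗ[ℂ] H))                  -- the simple reflections
    (hs : ∀ i x, s i x = x - B x (α i) • α i)
    (W : Subgroup (H ≃ₗ[ℂ] H))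
    (hW : W = Subgroup.closure (Set.range s))   -- the Weyl group
    (hWfin : Finite W)
    {G : Type*} [Group G] [Finite G] [MulAction G I]   -- G acts on the diagram
    (P : G →* (H ≃ₗ[ℂ] H))                 -- induced action of G on H
    (hP : ∀ (g : G) (i : I), P g (α i) = α (g • i))
    (hconj : ∀ (g : G) (i : I), P g * s i * (P g)⁻¹ = s (g • i))  -- G permutes the sᵢ
    (w : H ≃ₗ[ℂ] H) (hw : w ∈ W) :
    (∀ x : H, (∀ g : G, P g x = x) → ∀ g : G, P g (w x) = w x) ↔
      (∀ g : G, P g * w * (P g)⁻¹ = w) := by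
  constructor
  · -- hard direction : preserving `H^G` implies fixed by conjugation
    intro hfix g
    classical
    letI : Fintype G := Fintype.ofFinite G
    -- `G`-invariance of the form `B`
    have happly : ∀ (g : G) (z : H), (P g) ((P g)⁻¹ z) = z := by
      intro g z
      rw [show (P g) ((P g)⁻¹ z) = ((P g) * (P g)⁻¹) z from rfl, mul_inv_cancel]
      rfl
    have hBG1 : ∀ (g : G) (z : H) (i : I), B ((P g)⁻¹ z) (α i) = B z (α (g • i)) := by
      intro g z i
      have hc : (P g * s i * (P g)⁻¹) z = s (g • i) z := by rw [hconj]
      have hlhs : (P g * s i * (P g)⁻¹) z = P g (s i ((P g)⁻¹ z)) := rfl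
      rw [hlhs, hs, hs] at hc
      rw [map_sub, map_smul, happly, hP] at hc
      have h2 : B ((P g)⁻¹ z) (α i) • α (g • i) = B z (α (g • i)) • α (g • i) :=
        sub_right_inj.mp hc
      exact smul_left_injective ℂ (α.ne_zero (g • i)) h2
    have hBG2 : ∀ (g : G) (z : H) (k : I), B (P g z) (α k) = B z (α (g⁻¹ • k)) := by
      intro g z k
      have h' := hBG1 g⁻¹ z k
      rw [map_inv, inv_inv] at h'
      exact h'
    -- a regular dominant `G`-fixed vector `x`
    obtain ⟨y, hy⟩ := Stmt0Aux.exists_dual α B hs hdiag hW hWfin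
    have hcard : (Fintype.card G : ℂ) ≠ 0 := by
      exact_mod_cast Nat.cast_ne_zero.mpr Fintype.card_ne_zero
    set x : H := (Fintype.card G : ℂ)⁻¹ • ∑ g' : G, P g' y with hxdef
    have hxB : ∀ k, B x (α k) = 1 := by
      intro k
      have hsum : ∑ g' : G, B (P g' y) (α k) = (Fintype.card G : ℂ) := by
        calc ∑ g' : G, B (P g' y) (α k) = ∑ _g' : G, (1 : ℂ) :=
              Finset.sum_congr rfl fun g' _ => by rw [hBG2, hy]
        _ = (Fintype.card G : ℂ) := by simp
      rw [hxdef, map_smul, LinearMap.smul_apply, map_sum, LinearMap.sum_apply]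
      rw [hsum, smul_eq_mul, inv_mul_cancel₀ hcard]
    have hxfix : ∀ h : G, P h x = x := by
      intro h
      rw [hxdef, map_smul, map_sum]
      congr 1
      have hterm : ∀ g' : G, P h (P g' y) =
          (fun g'' : G => P g'' y) ((Equiv.mulLeft h) g') := by
        intro g'
        rw [show P h (P g' y) = (P h * P g') y from rfl, ← map_mul]
        rfl
      calc ∑ g' : G, P h (P g' y)
          = ∑ g' : G, (fun g'' : G => P g'' y) ((Equiv.mulLeft h) g') :=
            Finset.sum_congr rfl fun g' _ => hterm g'
        _ = ∑ g'' : G, P g'' y := Equiv.sum_comp (Equiv.mulLeft h) (fun g'' : G => P g'' y)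
    -- conjugation stabilizes the Weyl group
    have hwmem : P g * w * (P g)⁻¹ ∈ W := by
      rw [hW] at hw ⊢
      refine Subgroup.closure_induction ?_ ?_ ?_ ?_ hw
      · rintro v ⟨i, rfl⟩
        rw [hconj]
        exact Subgroup.subset_closure ⟨g • i, rfl⟩
      · rw [mul_one, mul_inv_cancel]
        exact one_mem _
      · intro a b _ _ ha hb
        have hab : P g * (a * b) * (P g)⁻¹ = (P g * a * (P g)⁻¹) * (P g * b * (P g)⁻¹) := by
          group
        rw [hab]; exact mul_mem ha hb
      · intro a _ ha
        have hai : P g * a⁻¹ * (P g)⁻¹ = (P g * a * (P g)⁻¹)⁻¹ := by group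
        rw [hai]; exact inv_mem ha
    -- the element `u` fixes `x`, hence is trivial
    set u := w⁻¹ * (P g * w * (P g)⁻¹) with hu
    have humem : u ∈ W := mul_mem (inv_mem hw) hwmem
    have hufix : u x = x := by
      have hPginv : (P g)⁻¹ x = x := by
        have h' := hxfix g⁻¹
        rw [map_inv] at h'
        exact h'
      have hw'x : (P g * w * (P g)⁻¹) x = w x := by
        show P g (w ((P g)⁻¹ x)) = w x
        rw [hPginv]
        exact hfix x hxfix g
      rw [hu]
      show w⁻¹ ((P g * w * (P g)⁻¹) x) = x
      rw [hw'x, show w⁻¹ (w x) = (w⁻¹ * w) x from rfl, inv_mul_cancel]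
      rfl
    have hInWu := Stmt0Aux.InW_of_mem α B hs hdiag hW humem
    have huone := Stmt0Aux.KL α B hs hdiag hBsymm hoff x hxB hInWu hufix
    rw [hu] at huone
    exact (inv_mul_eq_one.mp huone).symm
  · -- easy direction
    intro hcomm x hx g
    have h1 : P g * w = w * P g := by
      calc P g * w = (P g * w * (P g)⁻¹) * P g := by group
        _ = w * P g := by rw [hcomm g]
    calc P g (w x) = (P g * w) x := rfl
      _ = (w * P g) x := by rw [h1]
      _ = w (P g x) := rfl
      _ = w x := by rw [hx g]
end

section
/- Let $\hat{W}$ be the Weyl group of a simply laced root system with a finite group $G$ acting by diagram automorphisms, $J = I/G$ the set of orbits of nodes, and for each $j \in J$ let $w^0_j$ be the longest element of the parabolic subgroup $\hat{W}_j$ generated by $\{s_i : i \in j\}$. Given a subset $J' \subset J$, let $I' = \bigcup_{j \in J'} j$ and let $\hat{W}'$ be the parabolic subgroup of $\hat{W}$ generated by $\{s_i : i \in I'\}$. Then $\hat{W}' \cap \hat{W}^G$ equals the subgroup of $\hat{W}^G$ generated by $\{w^0_j : j \in J'\}$. -/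
/-- Word length of `g` with respect to a set `S` of generators. -/
noncomputable def lengthWrt {M : Type*} [Monoid M] (S : Set M) (g : M) : ℕ :=
  sInf {n | ∃ l : List M, (∀ x ∈ l, x ∈ S) ∧ l.length = n ∧ l.prod = g}

section WordLength

variable {Γ : Type*} [Group Γ] {S T : Set Γ} {u v : Γ}

lemma word_of_mem_closure (hS : ∀ x ∈ S, x * x = 1) (hu : u ∈ Subgroup.closure S) :
    ∃ l : List Γ, (∀ x ∈ l, x ∈ S) ∧ l.prod = u := by
  have h1 : u ∈ Submonoid.closure (S ∪ S⁻¹) := by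
    rw [← Subgroup.closure_toSubmonoid]; exact hu
  obtain ⟨l, hl, hlp⟩ := Submonoid.exists_list_of_mem_closure h1
  refine ⟨l, fun x hx => ?_, hlp⟩
  rcases hl x hx with h | h
  · exact h
  · have h2 := hS x⁻¹ h
    have : x = x⁻¹ := by
      have := congrArg (· * x) h2
      simpa [mul_assoc] using this.symm
    rw [this]; exact h
  
lemma lengthWrt_le_word (l : List Γ) (hl : ∀ x ∈ l, x ∈ S) :
    lengthWrt S l.prod ≤ l.length :=
  Nat.sInf_le ⟨l, hl, rfl, rfl⟩

lemma exists_reduced_word (hS : ∀ x ∈ S, x * x = 1) (hu : u ∈ Subgroup.closure S) :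
    ∃ l : List Γ, (∀ x ∈ l, x ∈ S) ∧ l.length = lengthWrt S u ∧ l.prod = u := by
  obtain ⟨l, hl, hlp⟩ := word_of_mem_closure hS hu
  have hne : {n | ∃ l : List Γ, (∀ x ∈ l, x ∈ S) ∧ l.length = n ∧ l.prod = u}.Nonempty :=
    ⟨l.length, l, hl, rfl, hlp⟩
  exact Nat.sInf_mem hne

lemma lengthWrt_one_eq_zero : lengthWrt S (1 : Γ) = 0 :=
  Nat.le_zero.mp (by simpa using lengthWrt_le_word (S := S) [] (by simp))

lemma eq_one_of_lengthWrt_eq_zero (hS : ∀ x ∈ S, x * x = 1)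
    (hu : u ∈ Subgroup.closure S) (h : lengthWrt S u = 0) : u = 1 := by
  obtain ⟨l, _, hlen, hprod⟩ := exists_reduced_word hS hu
  rw [h, List.length_eq_zero_iff] at hlen
  simpa [hlen] using hprod.symm

lemma lengthWrt_mul_le (hS : ∀ x ∈ S, x * x = 1)
    (hu : u ∈ Subgroup.closure S) (hv : v ∈ Subgroup.closure S) :
    lengthWrt S (u * v) ≤ lengthWrt S u + lengthWrt S v := by
  obtain ⟨l1, h1, hlen1, hp1⟩ := exists_reduced_word hS hu
  obtain ⟨l2, h2, hlen2, hp2⟩ := exists_reduced_word hS hv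
  have := lengthWrt_le_word (S := S) (l1 ++ l2) (by
    intro x hx; rcases List.mem_append.mp hx with h | h
    exacts [h1 x h, h2 x h])
  simpa [hp1, hp2, hlen1, hlen2] using this

lemma lengthWrt_mono (hS : ∀ x ∈ S, x * x = 1) (hST : S ⊆ T)
    (hu : u ∈ Subgroup.closure S) : lengthWrt T u ≤ lengthWrt S u := by
  obtain ⟨l, hl, hlen, hp⟩ := exists_reduced_word hS hu
  have := lengthWrt_le_word (S := T) l (fun x hx => hST (hl x hx))
  simpa [hp, hlen] using this

lemma exists_word_length_le (hS : ∀ x ∈ S, x * x = 1) (hu : u ∈ Subgroup.closure S)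
    {n : ℕ} (h : lengthWrt S u ≤ n) :
    ∃ l : List Γ, (∀ x ∈ l, x ∈ S) ∧ l.length ≤ n ∧ l.prod = u := by
  obtain ⟨l, hl, hlen, hp⟩ := exists_reduced_word hS hu
  exact ⟨l, hl, hlen ▸ h, hp⟩

end WordLength
structure RS (I : Type*) [Fintype I] (H : Type*) [AddCommGroup H] [Module ℂ H] where
  α : Module.Basis I ℂ H
  B : LinearMap.BilinForm ℂ H
  symm : ∀ x y : H, B x y = B y x
  diag : ∀ i, B (α i) (α i) = 2
  off : ∀ i j, i ≠ j → B (α i) (α j) = 0 ∨ B (α i) (α j) = -1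
  s : I → (H ≃ₗ[ℂ] H)
  hs : ∀ i x, s i x = x - B x (α i) • α i

namespace RS

variable {I : Type*} [Fintype I] {H : Type*} [AddCommGroup H] [Module ℂ H] (R : RS I H)

lemma alpha_ne_zero (i : I) : R.α i ≠ 0 := R.α.ne_zero i

lemma s_apply_self (i : I) : R.s i (R.α i) = -(R.α i) := by
  rw [R.hs i, R.diag i]; module

lemma s_sq (i : I) : R.s i * R.s i = 1 := by
  apply LinearEquiv.toLinearMap_injective
  ext x
  show R.s i (R.s i x) = x
  have h2 : R.B (x - R.B x (R.α i) • R.α i) (R.α i) = - R.B x (R.α i) := by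
    simp only [map_sub, map_smul, LinearMap.sub_apply, LinearMap.smul_apply, smul_eq_mul,
      R.diag i]
    ring
  rw [R.hs i x, R.hs i, h2]
  module

lemma s_inv (i : I) : (R.s i)⁻¹ = R.s i :=
  inv_eq_of_mul_eq_one_right (R.s_sq i)

lemma s_ne_one (i : I) : R.s i ≠ 1 := by
  intro h
  have h2 := R.s_apply_self i
  rw [h] at h2
  have h3 : (LinearEquiv.refl ℂ H) (R.α i) = R.α i := rfl
  rw [show (1 : H ≃ₗ[ℂ] H) = LinearEquiv.refl ℂ H from rfl, h3] at h2
  have h4 : (2 : ℂ) • R.α i = 0 := by rw [two_smul]; nth_rewrite 1 [h2]; abel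
  exact R.alpha_ne_zero i (by simpa using (smul_eq_zero.mp h4).resolve_left (by norm_num))

open Matrix in
lemma det_s (i : I) : LinearMap.det (R.s i : H →ₗ[ℂ] H) = -1 := by
  classical
  rw [← LinearMap.det_toMatrix R.α]
  have h : (LinearMap.toMatrix R.α R.α) (R.s i : H →ₗ[ℂ] H) =
      1 + replicateCol Unit (fun k => if k = i then (-1 : ℂ) else 0)
        * replicateRow Unit (fun l => R.B (R.α l) (R.α i)) := by
    ext k l
    rw [LinearMap.toMatrix_apply]
    simp only [LinearEquiv.coe_coe, R.hs i (R.α l), map_sub, _root_.map_smul, Matrix.add_apply,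
      Matrix.one_apply, Module.Basis.repr_self, Finsupp.smul_single, Finsupp.coe_sub,
      Pi.sub_apply, Finsupp.single_apply, Matrix.mul_apply, Matrix.replicateCol_apply, Matrix.replicateRow_apply,
      Finset.univ_unique, Finset.sum_singleton, smul_eq_mul, mul_one]
    by_cases hk : k = i
    · subst hk
      by_cases hkl : l = k
      · subst hkl; rw [if_pos rfl, if_pos rfl, if_pos rfl, R.diag]; ring
      · rw [if_neg hkl, if_neg (fun h : k = l => hkl h.symm), if_pos rfl]; simp; try ring
    · have hik : ¬ i = k := fun h => hk h.symm
      by_cases hkl : l = k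
      · rw [if_pos hkl, if_neg hik, if_pos hkl.symm, if_neg hk]; ring
      · rw [if_neg hkl, if_neg hik, if_neg (fun h : k = l => hkl h.symm), if_neg hk]; ring
  rw [h, det_one_add_replicateCol_mul_replicateRow]
  simp only [dotProduct, Finset.univ_unique, Finset.sum_singleton]
  simp [R.diag i]
  ring


/-! ### determinant parity -/

end RS

noncomputable def detC {H : Type*} [AddCommGroup H] [Module ℂ H] : (H ≃ₗ[ℂ] H) → ℂ :=
  fun w => LinearMap.det (w : H →ₗ[ℂ] H)

lemma detC_mul {H : Type*} [AddCommGroup H] [Module ℂ H] (u v : H ≃ₗ[ℂ] H) :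
    detC (u * v) = detC u * detC v := by
  unfold detC
  rw [show ((u * v : H ≃ₗ[ℂ] H) : H →ₗ[ℂ] H) = (u : H →ₗ[ℂ] H) ∘ₗ (v : H →ₗ[ℂ] H) from rfl,
    LinearMap.det_comp]

lemma detC_one {H : Type*} [AddCommGroup H] [Module ℂ H] : detC (1 : H ≃ₗ[ℂ] H) = 1 := by
  unfold detC
  rw [show ((1 : H ≃ₗ[ℂ] H) : H →ₗ[ℂ] H) = LinearMap.id from rfl, LinearMap.det_id]

namespace RS

variable {I : Type*} [Fintype I] {H : Type*} [AddCommGroup H] [Module ℂ H] (R : RS I H)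

lemma det'_word {S : Set (H ≃ₗ[ℂ] H)} (hS : S ⊆ Set.range R.s) (l : List (H ≃ₗ[ℂ] H))
    (hl : ∀ x ∈ l, x ∈ S) : detC l.prod = (-1) ^ l.length := by
  induction l with
  | nil => simp [detC_one]
  | cons x t ih =>
    rw [List.prod_cons, detC_mul, ih (fun y hy => hl y (List.mem_cons_of_mem x hy))]
    obtain ⟨i, hi⟩ := hS (hl x (List.mem_cons_self))
    rw [← hi, show detC (R.s i) = LinearMap.det ((R.s i : H ≃ₗ[ℂ] H) : H →ₗ[ℂ] H) from rfl,
      R.det_s i]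
    simp [pow_succ]

lemma s_mem_involutive {S : Set (H ≃ₗ[ℂ] H)} (hS : S ⊆ Set.range R.s) :
    ∀ x ∈ S, x * x = 1 := by
  rintro x hx
  obtain ⟨i, rfl⟩ := hS hx
  exact R.s_sq i

lemma lengthWrt_mul_s_ne {S : Set (H ≃ₗ[ℂ] H)} (hS : S ⊆ Set.range R.s)
    {u : H ≃ₗ[ℂ] H} (hu : u ∈ Subgroup.closure S) (i : I) (hi : R.s i ∈ S) :
    lengthWrt S (u * R.s i) ≠ lengthWrt S u := by
  intro h
  obtain ⟨l1, hl1, hlen1, hp1⟩ := exists_reduced_word (R.s_mem_involutive hS) hu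
  have husi : u * R.s i ∈ Subgroup.closure S :=
    mul_mem hu (Subgroup.subset_closure hi)
  obtain ⟨l2, hl2, hlen2, hp2⟩ := exists_reduced_word (R.s_mem_involutive hS) husi
  have h1 : detC (u * R.s i) = detC u * (-1) := by
    rw [detC_mul]
    rw [show detC (R.s i) = LinearMap.det ((R.s i : H ≃ₗ[ℂ] H) : H →ₗ[ℂ] H) from rfl, R.det_s i]
  have h2 : detC u = (-1 : ℂ) ^ l1.length := by rw [← hp1]; exact R.det'_word hS l1 hl1
  have h3 : detC (u * R.s i) = (-1 : ℂ) ^ l2.length := by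
    rw [← hp2]; exact R.det'_word hS l2 hl2
  rw [h2, h3, hlen1, hlen2, h] at h1
  have h4 : ((-1 : ℂ) ^ lengthWrt S u) ≠ 0 := by
    apply pow_ne_zero; norm_num
  have h5 : (2 : ℂ) * (-1) ^ lengthWrt S u = 0 := by linear_combination h1
  rcases mul_eq_zero.mp h5 with h6 | h6
  · norm_num at h6
  · exact h4 h6

/-! ### coordinates, positivity -/

def NN (v : H) : Prop := ∀ i, 0 ≤ (R.α.repr v i).re ∧ (R.α.repr v i).im = 0

def NP (v : H) : Prop := ∀ i, (R.α.repr v i).re ≤ 0 ∧ (R.α.repr v i).im = 0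

def Supp (K : Set I) (v : H) : Prop := ∀ i, i ∉ K → R.α.repr v i = 0

lemma NN_alpha (i : I) : R.NN (R.α i) := by
  intro k
  simp only [Module.Basis.repr_self, Finsupp.single_apply]
  by_cases h : i = k <;> simp [h]

lemma NP_neg_of_NN {v : H} (h : R.NN v) : R.NP (-v) := by
  intro i; have := h i; simp only [map_neg, Finsupp.coe_neg, Pi.neg_apply, Complex.neg_re,
    Complex.neg_im, neg_nonpos, neg_eq_zero]; exact this

lemma NN_neg_of_NP {v : H} (h : R.NP v) : R.NN (-v) := by
  intro i; have := h i; simp only [map_neg, Finsupp.coe_neg, Pi.neg_apply, Complex.neg_re,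
    Complex.neg_im, neg_nonneg, neg_eq_zero]; exact this

lemma eq_zero_of_NN_NP {v : H} (h1 : R.NN v) (h2 : R.NP v) : v = 0 := by
  have h : R.α.repr v = 0 := by
    ext i
    have a1 := h1 i; have a2 := h2 i
    have : (R.α.repr v i).re = 0 := le_antisymm a2.1 a1.1
    apply Complex.ext <;> simp [this, a1.2]
  exact R.α.repr.map_eq_zero_iff.mp h

end RS

namespace RS

variable {I : Type*} [Fintype I] {H : Type*} [AddCommGroup H] [Module ℂ H] (R : RS I H)

lemma NP_apply (w : H ≃ₗ[ℂ] H) {v : H} (hv : R.NN v)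
    (h : ∀ k, R.α.repr v k ≠ 0 → R.NP (w (R.α k))) : R.NP (w v) := by
  have hv' : w v = ∑ k, R.α.repr v k • w (R.α k) := by
    conv_lhs => rw [← R.α.sum_repr v]
    rw [map_sum]
    simp only [map_smul]
  have hco : ∀ m, R.α.repr (w v) m = ∑ k, R.α.repr v k * R.α.repr (w (R.α k)) m := by
    intro m
    rw [hv', map_sum]
    simp [Finsupp.finset_sum_apply]
  intro m
  constructor
  · rw [hco m, Complex.re_sum]
    apply Finset.sum_nonpos
    intro k _
    by_cases hk : R.α.repr v k = 0
    · simp [hk]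
    · have h1 := hv k
      have h2 := (h k hk) m
      rw [Complex.mul_re, h1.2]
      nlinarith [h1.1, h2.1, h2.2]
  · rw [hco m, Complex.im_sum]
    apply Finset.sum_eq_zero
    intro k _
    by_cases hk : R.α.repr v k = 0
    · simp [hk]
    · have h1 := hv k
      have h2 := (h k hk) m
      rw [Complex.mul_im, h1.2, h2.2]
      ring

lemma Supp_neg {K : Set I} {v : H} (h : R.Supp K v) : R.Supp K (-v) := by
  intro i hi; simp [h i hi]

lemma Supp_add {K : Set I} {u v : H} (hu : R.Supp K u) (hv : R.Supp K v) :
    R.Supp K (u + v) := by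
  intro i hi; simp [hu i hi, hv i hi]

lemma Supp_sub {K : Set I} {u v : H} (hu : R.Supp K u) (hv : R.Supp K v) :
    R.Supp K (u - v) := by
  intro i hi; simp [hu i hi, hv i hi]

lemma Supp_smul {K : Set I} (c : ℂ) {v : H} (h : R.Supp K v) : R.Supp K (c • v) := by
  intro i hi; simp [h i hi]

lemma Supp_alpha {K : Set I} {i : I} (hi : i ∈ K) : R.Supp K (R.α i) := by
  classical
  intro k hk
  rw [Module.Basis.repr_self, Finsupp.single_apply, if_neg (fun h : i = k => hk (h ▸ hi))]

lemma Supp_word_sub {K : Set I} (l : List (H ≃ₗ[ℂ] H)) (hl : ∀ x ∈ l, x ∈ R.s '' K)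
    (v : H) : R.Supp K (l.prod v - v) := by
  induction l with
  | nil => intro i _; simp
  | cons x t ih =>
    have hx : (x :: t).prod v = x (t.prod v) := rfl
    obtain ⟨k, hk, hke⟩ := hl x (List.mem_cons_self)
    have h1 : x (t.prod v) - t.prod v = -(R.B (t.prod v) (R.α k)) • R.α k := by
      rw [← hke, R.hs k]
      module
    have h2 : R.Supp K (x (t.prod v) - t.prod v) := by
      rw [h1]; exact R.Supp_smul _ (R.Supp_alpha hk)
    have h3 := ih (fun y hy => hl y (List.mem_cons_of_mem x hy))
    have h4 := R.Supp_add h2 h3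
    have e : x (t.prod v) - v = (x (t.prod v) - t.prod v) + (t.prod v - v) := by abel
    rw [hx, e]
    exact h4

lemma Supp_apply_sub {K : Set I} {w : H ≃ₗ[ℂ] H} (hw : w ∈ Subgroup.closure (R.s '' K))
    (v : H) : R.Supp K (w v - v) := by
  obtain ⟨l, hl, hp⟩ := word_of_mem_closure
    (R.s_mem_involutive (by rintro x ⟨k, _, rfl⟩; exact ⟨k, rfl⟩)) hw
  rw [← hp]
  exact R.Supp_word_sub l hl v

/-! ### roots -/

def roots (K : Set I) : Set H :=
  {v | ∃ w ∈ Subgroup.closure (R.s '' K), ∃ i ∈ K, v = w (R.α i)}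

lemma s_image_subset_range (K : Set I) : R.s '' K ⊆ Set.range R.s := by
  rintro x ⟨k, _, rfl⟩; exact ⟨k, rfl⟩

lemma alpha_mem_roots {K : Set I} {i : I} (hi : i ∈ K) : R.α i ∈ R.roots K :=
  ⟨1, Subgroup.one_mem _, i, hi, rfl⟩

lemma roots_apply_mem {K : Set I} {w : H ≃ₗ[ℂ] H} (hw : w ∈ Subgroup.closure (R.s '' K))
    {v : H} (hv : v ∈ R.roots K) : w v ∈ R.roots K := by
  obtain ⟨w', hw', i, hi, rfl⟩ := hv
  exact ⟨w * w', mul_mem hw hw', i, hi, rfl⟩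

lemma roots_neg_mem {K : Set I} {v : H} (hv : v ∈ R.roots K) : -v ∈ R.roots K := by
  obtain ⟨w, hw, i, hi, rfl⟩ := hv
  refine ⟨w * R.s i, mul_mem hw (Subgroup.subset_closure ⟨i, hi, rfl⟩), i, hi, ?_⟩
  have : (w * R.s i) (R.α i) = w (R.s i (R.α i)) := rfl
  rw [this, R.s_apply_self, map_neg]

lemma roots_ne_zero {K : Set I} {v : H} (hv : v ∈ R.roots K) : v ≠ 0 := by
  obtain ⟨w, _, i, _, rfl⟩ := hv
  simp only [ne_eq, LinearEquiv.map_eq_zero_iff]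
  exact R.alpha_ne_zero i

lemma roots_supp {K : Set I} {v : H} (hv : v ∈ R.roots K) : R.Supp K v := by
  obtain ⟨w, hw, i, hi, rfl⟩ := hv
  have h1 := R.Supp_apply_sub hw (R.α i)
  have h2 := R.Supp_add h1 (R.Supp_alpha hi)
  have e : w (R.α i) = (w (R.α i) - R.α i) + R.α i := by abel
  rw [e]
  exact h2

lemma roots_mono {K K' : Set I} (h : K ⊆ K') {v : H} (hv : v ∈ R.roots K) :
    v ∈ R.roots K' := by
  obtain ⟨w, hw, i, hi, rfl⟩ := hv
  exact ⟨w, Subgroup.closure_mono (Set.image_mono h) hw, i, h hi, rfl⟩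

end RS

section Dihedral

variable {Γ : Type*} [Group Γ] {S : Set Γ} {u : Γ}

lemma length_ge_one (hS : ∀ x ∈ S, x * x = 1) (hu : u ∈ Subgroup.closure S)
    (h : u ≠ 1) : 1 ≤ lengthWrt S u := by
  by_contra hc
  exact h (eq_one_of_lengthWrt_eq_zero hS hu (by omega))

lemma cases_of_length_le_one (hS : ∀ x ∈ S, x * x = 1) (hu : u ∈ Subgroup.closure S)
    (h : lengthWrt S u ≤ 1) : u = 1 ∨ u ∈ S := by
  obtain ⟨l, hl, hlen, hp⟩ := exists_word_length_le hS hu h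
  match l, hlen with
  | [], _ => exact Or.inl (by simpa using hp.symm)
  | [z], _ =>
    refine Or.inr ?_
    have : z ∈ S := hl z (by simp)
    rw [← hp]; simpa using this

lemma cases_of_length_le_two (hS : ∀ x ∈ S, x * x = 1) (hu : u ∈ Subgroup.closure S)
    (h : lengthWrt S u ≤ 2) : u = 1 ∨ u ∈ S ∨ ∃ z ∈ S, ∃ w ∈ S, u = z * w := by
  obtain ⟨l, hl, hlen, hp⟩ := exists_word_length_le hS hu h
  match l, hlen with
  | [], _ => exact Or.inl (by simpa using hp.symm)
  | [z], _ =>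
    have : z ∈ S := hl z (by simp)
    exact Or.inr (Or.inl (by rw [← hp]; simpa using this))
  | [z, w], _ =>
    refine Or.inr (Or.inr ⟨z, hl z (by simp), w, hl w (by simp), ?_⟩)
    rw [← hp]; simp

lemma length_ge_two (hS : ∀ x ∈ S, x * x = 1) (hu : u ∈ Subgroup.closure S)
    (h1 : u ≠ 1) (h2 : u ∉ S) : 2 ≤ lengthWrt S u := by
  by_contra hc
  rcases cases_of_length_le_one hS hu (by omega) with h | h
  exacts [h1 h, h2 h]

lemma length_ge_three (hS : ∀ x ∈ S, x * x = 1) (hu : u ∈ Subgroup.closure S)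
    (h1 : u ≠ 1) (h2 : u ∉ S) (h3 : ∀ z ∈ S, ∀ w ∈ S, u ≠ z * w) :
    3 ≤ lengthWrt S u := by
  by_contra hc
  rcases cases_of_length_le_two hS hu (by omega) with h | h | ⟨z, hz, w, hw, h⟩
  exacts [h1 h, h2 h, h3 z hz w hw h]

lemma closure_pair_cases_comm {x y : Γ} (hx : x * x = 1) (hy : y * y = 1)
    (hc : x * y = y * x) (hu : u ∈ Subgroup.closure {x, y}) :
    u = 1 ∨ u = x ∨ u = y ∨ u = x * y := by
  have hS : ∀ z ∈ ({x, y} : Set Γ), z * z = 1 := by rintro z (rfl | rfl) <;> assumption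
  obtain ⟨l, hl, hp⟩ := word_of_mem_closure hS hu
  rw [← hp]; clear hp hu
  induction l with
  | nil => exact Or.inl rfl
  | cons z t ih =>
    have hz : z = x ∨ z = y := hl z (by simp)
    have ht := ih (fun w hw => hl w (List.mem_cons_of_mem z hw))
    rw [List.prod_cons]
    rcases hz with rfl | rfl <;> rcases ht with h | h | h | h <;> rw [h]
    · exact Or.inr (Or.inl (mul_one _))
    · exact Or.inl hx
    · exact Or.inr (Or.inr (Or.inr rfl))
    · refine Or.inr (Or.inr (Or.inl ?_)); rw [← mul_assoc, hx, one_mul]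
    · exact Or.inr (Or.inr (Or.inl (mul_one _)))
    · exact Or.inr (Or.inr (Or.inr hc.symm))
    · exact Or.inl hy
    · refine Or.inr (Or.inl ?_); rw [← mul_assoc, ← hc, mul_assoc, hy, mul_one]

lemma closure_pair_cases_braid {x y : Γ} (hx : x * x = 1) (hy : y * y = 1)
    (hb : x * y * x = y * x * y) (hu : u ∈ Subgroup.closure {x, y}) :
    u = 1 ∨ u = x ∨ u = y ∨ u = x * y ∨ u = y * x ∨ u = x * y * x := by
  have hS : ∀ z ∈ ({x, y} : Set Γ), z * z = 1 := by rintro z (rfl | rfl) <;> assumption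
  obtain ⟨l, hl, hp⟩ := word_of_mem_closure hS hu
  rw [← hp]; clear hp hu
  induction l with
  | nil => exact Or.inl rfl
  | cons z t ih =>
    have hz : z = x ∨ z = y := hl z (by simp)
    have ht := ih (fun w hw => hl w (List.mem_cons_of_mem z hw))
    rw [List.prod_cons]
    rcases hz with rfl | rfl <;> rcases ht with h | h | h | h | h | h <;> rw [h]
    -- x * 1 = x
    · exact Or.inr (Or.inl (mul_one _))
    -- x * x = 1
    · exact Or.inl hx
    -- x * y
    · exact Or.inr (Or.inr (Or.inr (Or.inl rfl)))
    -- x * (x * y) = y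
    · refine Or.inr (Or.inr (Or.inl ?_)); rw [← mul_assoc, hx, one_mul]
    -- x * (y * x) = x*y*x
    · exact Or.inr (Or.inr (Or.inr (Or.inr (Or.inr (mul_assoc _ _ _).symm))))
    -- x * (x*y*x) = y*x
    · refine Or.inr (Or.inr (Or.inr (Or.inr (Or.inl ?_))))
      rw [← mul_assoc, ← mul_assoc, hx, one_mul]
    -- y * 1 = y
    · exact Or.inr (Or.inr (Or.inl (mul_one _)))
    -- y * x
    · exact Or.inr (Or.inr (Or.inr (Or.inr (Or.inl rfl))))
    -- y * y = 1
    · exact Or.inl hy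
    -- y * (x * y) = x*y*x
    · exact Or.inr (Or.inr (Or.inr (Or.inr (Or.inr (by rw [← mul_assoc]; exact hb.symm)))))
    -- y * (y * x) = x
    · refine Or.inr (Or.inl ?_); rw [← mul_assoc, hy, one_mul]
    -- y * (x*y*x) = x*y
    · refine Or.inr (Or.inr (Or.inr (Or.inl ?_)))
      rw [← mul_assoc, ← mul_assoc, ← hb, mul_assoc, hx, mul_one]

end Dihedral

namespace RS

variable {I : Type*} [Fintype I] {H : Type*} [AddCommGroup H] [Module ℂ H] (R : RS I H)

lemma s_comm {i j : I} (h0 : R.B (R.α i) (R.α j) = 0) : R.s i * R.s j = R.s j * R.s i := by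
  have hji : R.B (R.α j) (R.α i) = 0 := by rw [R.symm]; exact h0
  apply LinearEquiv.toLinearMap_injective
  ext x
  show R.s i (R.s j x) = R.s j (R.s i x)
  rw [R.hs j x, R.hs i, R.hs i x, R.hs j]
  simp only [map_sub, map_smul, LinearMap.sub_apply, LinearMap.smul_apply, smul_eq_mul,
    hji, h0]
  module

lemma braid_formula {i j : I} (h1 : R.B (R.α i) (R.α j) = -1)
    (hji : R.B (R.α j) (R.α i) = -1) (x : H) :
    R.s i (R.s j (R.s i x)) =
      x - (R.B x (R.α i) + R.B x (R.α j)) • (R.α i + R.α j) := by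
  rw [R.hs i x, R.hs j, R.hs i]
  simp only [map_sub, map_smul, LinearMap.sub_apply, LinearMap.smul_apply, smul_eq_mul,
    R.diag i, R.diag j, h1, hji]
  module

lemma s_braid {i j : I} (h1 : R.B (R.α i) (R.α j) = -1) :
    R.s i * R.s j * R.s i = R.s j * R.s i * R.s j := by
  have hji : R.B (R.α j) (R.α i) = -1 := by rw [R.symm]; exact h1
  apply LinearEquiv.toLinearMap_injective
  ext x
  show R.s i (R.s j (R.s i x)) = R.s j (R.s i (R.s j x))
  rw [R.braid_formula h1 hji x, R.braid_formula hji h1 x]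
  module

lemma pair_comb_injective {i j : I} (hij : i ≠ j) {a b c d : ℂ}
    (h : a • R.α i + b • R.α j = c • R.α i + d • R.α j) : a = c ∧ b = d := by
  classical
  have hi := congrArg (fun v => R.α.repr v i) h
  have hj := congrArg (fun v => R.α.repr v j) h
  simp only [map_add, map_smul, Module.Basis.repr_self, Finsupp.coe_add, Finsupp.coe_smul,
    Pi.add_apply, Pi.smul_apply, Finsupp.single_apply, if_pos rfl, if_true, if_neg hij,
    if_neg (Ne.symm hij), smul_eq_mul, mul_one, mul_zero, add_zero, zero_add] at hi hj
  exact ⟨hi, hj⟩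

lemma comb_ne_comb {i j : I} (hij : i ≠ j) {a b c d : ℂ} (h : ¬(a = c ∧ b = d)) :
    a • R.α i + b • R.α j ≠ c • R.α i + d • R.α j :=
  fun e => h (R.pair_comb_injective hij e)

lemma ne_of_apply_ne (u v : H ≃ₗ[ℂ] H) (x : H) (h : u x ≠ v x) : u ≠ v :=
  fun e => h (by rw [e])

end RS

namespace RS

variable {I : Type*} [Fintype I] {H : Type*} [AddCommGroup H] [Module ℂ H] (R : RS I H)

lemma dihedral_key {i j : I} (hij : i ≠ j) {u : H ≃ₗ[ℂ] H}
    (hu : u ∈ Subgroup.closure ({R.s i, R.s j} : Set (H ≃ₗ[ℂ] H))) :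
    (∃ p q : ℝ, 0 ≤ p ∧ 0 ≤ q ∧ u (R.α i) = (p : ℂ) • R.α i + (q : ℂ) • R.α j) ∨
    lengthWrt ({R.s i, R.s j} : Set (H ≃ₗ[ℂ] H)) (u * R.s i) <
      lengthWrt ({R.s i, R.s j} : Set (H ≃ₗ[ℂ] H)) u := by
  classical
  set S : Set (H ≃ₗ[ℂ] H) := {R.s i, R.s j} with hSdef
  have hmemS : ∀ z, z ∈ S ↔ z = R.s i ∨ z = R.s j := by
    intro z; simp [hSdef]
  have hSr : S ⊆ Set.range R.s := by
    intro z hz; rcases (hmemS z).1 hz with rfl | rfl <;> exact ⟨_, rfl⟩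
  have hinv : ∀ z ∈ S, z * z = 1 := R.s_mem_involutive hSr
  have hmi : R.s i ∈ Subgroup.closure S :=
    Subgroup.subset_closure ((hmemS _).2 (Or.inl rfl))
  have hmj : R.s j ∈ Subgroup.closure S :=
    Subgroup.subset_closure ((hmemS _).2 (Or.inr rfl))
  have hxx : R.s i * R.s i = 1 := R.s_sq i
  have hyy : R.s j * R.s j = 1 := R.s_sq j
  have len_sj_le : lengthWrt S (R.s j) ≤ 1 := by
    have h := lengthWrt_le_word (S := S) [R.s j]
      (by intro z hz; simp only [List.mem_singleton] at hz; rw [hz]; exact (hmemS _).2 (Or.inr rfl))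
    simpa using h
  have len_si_pos : 1 ≤ lengthWrt S (R.s i) := length_ge_one hinv hmi (R.s_ne_one i)
  have len_sisj_le : lengthWrt S (R.s i * R.s j) ≤ 2 := by
    have h := lengthWrt_le_word (S := S) [R.s i, R.s j] (by
      intro z hz
      rcases List.mem_pair.mp hz with rfl | rfl
      · exact (hmemS _).2 (Or.inl rfl)
      · exact (hmemS _).2 (Or.inr rfl))
    simpa using h
  have v1i : (1 : H ≃ₗ[ℂ] H) (R.α i) = (1 : ℂ) • R.α i + (0 : ℂ) • R.α j := by
    show R.α i = _ ; module
  have v1j : (1 : H ≃ₗ[ℂ] H) (R.α j) = (0 : ℂ) • R.α i + (1 : ℂ) • R.α j := by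
    show R.α j = _ ; module
  have vsii : R.s i (R.α i) = (-1 : ℂ) • R.α i + (0 : ℂ) • R.α j := by
    rw [R.s_apply_self i]; module
  have vsjj : R.s j (R.α j) = (0 : ℂ) • R.α i + (-1 : ℂ) • R.α j := by
    rw [R.s_apply_self j]; module
  rcases R.off i j hij with h0 | h1
  -- commuting case
  · have hji0 : R.B (R.α j) (R.α i) = 0 := by rw [R.symm]; exact h0
    have vsji : R.s j (R.α i) = (1 : ℂ) • R.α i + (0 : ℂ) • R.α j := by
      rw [R.hs j (R.α i), h0]; module
    have vsij : R.s i (R.α j) = (0 : ℂ) • R.α i + (1 : ℂ) • R.α j := by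
      rw [R.hs i (R.α j), hji0]; module
    have hcomm := R.s_comm h0
    have vmi : (R.s i * R.s j) (R.α i) = (-1 : ℂ) • R.α i + (0 : ℂ) • R.α j := by
      show R.s i (R.s j (R.α i)) = _
      rw [vsji, map_add, map_smul, map_smul, vsii, vsij]; module
    have vmj : (R.s i * R.s j) (R.α j) = (0 : ℂ) • R.α i + (-1 : ℂ) • R.α j := by
      show R.s i (R.s j (R.α j)) = _
      rw [vsjj, map_add, map_smul, map_smul, vsii, vsij]; module
    rcases closure_pair_cases_comm hxx hyy hcomm hu with rfl | rfl | rfl | rfl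
    · exact Or.inl ⟨1, 0, zero_le_one, le_refl 0, by rw [v1i]; norm_num⟩
    · right; rw [hxx, lengthWrt_one_eq_zero]; omega
    · exact Or.inl ⟨1, 0, zero_le_one, le_refl 0, by rw [vsji]; norm_num⟩
    · right
      have hred : (R.s i * R.s j) * R.s i = R.s j := by
        rw [hcomm, mul_assoc, hxx, mul_one]
      rw [hred]
      have h2 : 2 ≤ lengthWrt S (R.s i * R.s j) := by
        apply length_ge_two hinv (mul_mem hmi hmj)
        · apply ne_of_apply_ne _ _ (R.α i)
          rw [vmi, v1i]
          exact R.comb_ne_comb hij (by norm_num)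
        · intro hmem
          rcases (hmemS _).1 hmem with h | h
          · exact ne_of_apply_ne _ _ (R.α j)
              (by rw [vmj, vsij]; exact R.comb_ne_comb hij (by norm_num)) h
          · exact ne_of_apply_ne _ _ (R.α i)
              (by rw [vmi, vsji]; exact R.comb_ne_comb hij (by norm_num)) h
      omega
  -- braid case
  · have hji1 : R.B (R.α j) (R.α i) = -1 := by rw [R.symm]; exact h1
    have vsji : R.s j (R.α i) = (1 : ℂ) • R.α i + (1 : ℂ) • R.α j := by
      rw [R.hs j (R.α i), h1]; module
    have vsij : R.s i (R.α j) = (1 : ℂ) • R.α i + (1 : ℂ) • R.α j := by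
      rw [R.hs i (R.α j), hji1]; module
    have hbr := R.s_braid h1
    have vmi : (R.s i * R.s j) (R.α i) = (0 : ℂ) • R.α i + (1 : ℂ) • R.α j := by
      show R.s i (R.s j (R.α i)) = _
      rw [vsji, map_add, map_smul, map_smul, vsii, vsij]; module
    have vni : (R.s j * R.s i) (R.α i) = (-1 : ℂ) • R.α i + (-1 : ℂ) • R.α j := by
      show R.s j (R.s i (R.α i)) = _
      rw [R.s_apply_self i, map_neg, vsji]; module
    have vwi : (R.s i * R.s j * R.s i) (R.α i) = (0 : ℂ) • R.α i + (-1 : ℂ) • R.α j := by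
      show (R.s i * R.s j) (R.s i (R.α i)) = _
      rw [R.s_apply_self i, map_neg, vmi]; module
    rcases closure_pair_cases_braid hxx hyy hbr hu with rfl | rfl | rfl | rfl | rfl | rfl
    · exact Or.inl ⟨1, 0, zero_le_one, le_refl 0, by rw [v1i]; norm_num⟩
    · right; rw [hxx, lengthWrt_one_eq_zero]; omega
    · exact Or.inl ⟨1, 1, zero_le_one, zero_le_one, by rw [vsji]; norm_num⟩
    · exact Or.inl ⟨0, 1, le_refl 0, zero_le_one, by rw [vmi]; norm_num⟩
    · right
      have hred : (R.s j * R.s i) * R.s i = R.s j := by rw [mul_assoc, hxx, mul_one]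
      rw [hred]
      have h2 : 2 ≤ lengthWrt S (R.s j * R.s i) := by
        apply length_ge_two hinv (mul_mem hmj hmi)
        · apply ne_of_apply_ne _ _ (R.α i)
          rw [vni, v1i]
          exact R.comb_ne_comb hij (by norm_num)
        · intro hmem
          rcases (hmemS _).1 hmem with h | h
          · exact ne_of_apply_ne _ _ (R.α i)
              (by rw [vni, vsii]; exact R.comb_ne_comb hij (by norm_num)) h
          · exact ne_of_apply_ne _ _ (R.α i)
              (by rw [vni, vsji]; exact R.comb_ne_comb hij (by norm_num)) h
      omega
    · right
      have hred : (R.s i * R.s j * R.s i) * R.s i = R.s i * R.s j := by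
        rw [mul_assoc, hxx, mul_one]
      rw [hred]
      have h3 : 3 ≤ lengthWrt S (R.s i * R.s j * R.s i) := by
        apply length_ge_three hinv (mul_mem (mul_mem hmi hmj) hmi)
        · apply ne_of_apply_ne _ _ (R.α i)
          rw [vwi, v1i]
          exact R.comb_ne_comb hij (by norm_num)
        · intro hmem
          rcases (hmemS _).1 hmem with h | h
          · exact ne_of_apply_ne _ _ (R.α i)
              (by rw [vwi, vsii]; exact R.comb_ne_comb hij (by norm_num)) h
          · exact ne_of_apply_ne _ _ (R.α i)
              (by rw [vwi, vsji]; exact R.comb_ne_comb hij (by norm_num)) h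
        · intro z hz w hw
          rcases (hmemS _).1 hz with rfl | rfl <;> rcases (hmemS _).1 hw with rfl | rfl
          · rw [hxx]
            exact ne_of_apply_ne _ _ (R.α i)
              (by rw [vwi, v1i]; exact R.comb_ne_comb hij (by norm_num))
          · exact ne_of_apply_ne _ _ (R.α i)
              (by rw [vwi, vmi]; exact R.comb_ne_comb hij (by norm_num))
          · exact ne_of_apply_ne _ _ (R.α i)
              (by rw [vwi, vni]; exact R.comb_ne_comb hij (by norm_num))
          · rw [hyy]
            exact ne_of_apply_ne _ _ (R.α i)
              (by rw [vwi, v1i]; exact R.comb_ne_comb hij (by norm_num))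
      omega

end RS

namespace RS

variable {I : Type*} [Fintype I] {H : Type*} [AddCommGroup H] [Module ℂ H] (R : RS I H)

lemma NN_add {u v : H} (hu : R.NN u) (hv : R.NN v) : R.NN (u + v) := by
  intro m
  have h1 := hu m; have h2 := hv m
  simp only [map_add, Finsupp.coe_add, Pi.add_apply, Complex.add_re, Complex.add_im]
  constructor
  · linarith [h1.1, h2.1]
  · rw [h1.2, h2.2]; ring

lemma NN_smul_real {p : ℝ} (hp : 0 ≤ p) {v : H} (hv : R.NN v) : R.NN ((p : ℂ) • v) := by
  intro m
  have h1 := hv m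
  simp only [map_smul, Finsupp.coe_smul, Pi.smul_apply, smul_eq_mul, Complex.mul_re,
    Complex.mul_im, Complex.ofReal_re, Complex.ofReal_im]
  constructor
  · nlinarith [h1.1, h1.2]
  · rw [h1.2]; ring

theorem NN_of_length_lt (K : Set I) :
    ∀ n : ℕ, ∀ w ∈ Subgroup.closure (R.s '' K), lengthWrt (R.s '' K) w = n →
      ∀ i ∈ K, lengthWrt (R.s '' K) w < lengthWrt (R.s '' K) (w * R.s i) →
      R.NN (w (R.α i)) := by
  intro n
  induction n using Nat.strong_induction_on with
  | _ n IH =>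
  intro w hw hlen i hi hlt
  have hSr : R.s '' K ⊆ Set.range R.s := R.s_image_subset_range K
  have hinv : ∀ z ∈ R.s '' K, z * z = 1 := R.s_mem_involutive hSr
  rcases Nat.eq_zero_or_pos n with hn0 | hnpos
  · have : w = 1 := eq_one_of_lengthWrt_eq_zero hinv hw (hn0 ▸ hlen)
    subst this
    have h1 : (1 : H ≃ₗ[ℂ] H) (R.α i) = R.α i := rfl
    rw [h1]; exact R.NN_alpha i
  -- get the last letter of a reduced word
  obtain ⟨l, hl, hllen, hlp⟩ := exists_reduced_word hinv hw
  have hlne : l ≠ [] := by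
    intro h; rw [h] at hllen; simp at hllen; omega
  obtain ⟨j, hjK, hjlast⟩ : ∃ j ∈ K, l.getLast hlne = R.s j := by
    have := hl _ (List.getLast_mem hlne)
    obtain ⟨j, hjK, hje⟩ := this
    exact ⟨j, hjK, hje.symm⟩
  have hsplit : l = l.dropLast ++ [R.s j] := by
    rw [← hjlast]; exact (List.dropLast_append_getLast hlne).symm
  have hwsj : w * R.s j = l.dropLast.prod := by
    have h1 : w = l.dropLast.prod * R.s j := by
      rw [← hlp]; conv_lhs => rw [hsplit]
      rw [List.prod_append, List.prod_singleton]
    rw [h1, mul_assoc, R.s_sq j, mul_one]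
  have hlwsj : lengthWrt (R.s '' K) (w * R.s j) ≤ n - 1 := by
    rw [hwsj]
    have h1 := lengthWrt_le_word (S := R.s '' K) l.dropLast
      (fun x hx => hl x (List.mem_of_mem_dropLast hx))
    have h2 : l.dropLast.length = n - 1 := by
      rw [List.length_dropLast, hllen, hlen]
    omega
  have hij : i ≠ j := by
    intro h; subst h
    rw [hlen] at hlt
    omega
  -- the dihedral subgroup
  set SP : Set (H ≃ₗ[ℂ] H) := {R.s i, R.s j} with hSPdef
  have hSPsub : SP ⊆ R.s '' K := by
    rintro z (rfl | rfl)
    exacts [⟨i, hi, rfl⟩, ⟨j, hjK, rfl⟩]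
  have hSPr : SP ⊆ Set.range R.s := fun z hz => hSr (hSPsub hz)
  have hSPinv : ∀ z ∈ SP, z * z = 1 := R.s_mem_involutive hSPr
  have hsiSP : R.s i ∈ SP := Or.inl rfl
  have hsjSP : R.s j ∈ SP := Or.inr rfl
  -- the set A and a minimal element
  set A : Set (H ≃ₗ[ℂ] H) := {v | v ∈ Subgroup.closure (R.s '' K) ∧
    v⁻¹ * w ∈ Subgroup.closure SP ∧
    n = lengthWrt (R.s '' K) v + lengthWrt SP (v⁻¹ * w)} with hAdef
  have hwA : w ∈ A := by
    refine ⟨hw, ?_, ?_⟩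
    · rw [inv_mul_cancel]; exact Subgroup.one_mem _
    · rw [inv_mul_cancel, lengthWrt_one_eq_zero, hlen]; omega
  have hTne : (lengthWrt (R.s '' K) '' A).Nonempty := ⟨_, w, hwA, rfl⟩
  obtain ⟨v, hvA, hvm⟩ := Nat.sInf_mem hTne
  have hmin : ∀ v' ∈ A, lengthWrt (R.s '' K) v ≤ lengthWrt (R.s '' K) v' := by
    intro v' hv'
    rw [hvm]
    exact Nat.sInf_le ⟨v', hv', rfl⟩
  obtain ⟨hvS, huSP, hsum⟩ := hvA
  set u : H ≃ₗ[ℂ] H := v⁻¹ * w with hudef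
  have hvu : w = v * u := by rw [hudef, ← mul_assoc, mul_inv_cancel, one_mul]
  -- v times any of the two generators is longer
  have key : ∀ k, R.s k ∈ SP →
      lengthWrt (R.s '' K) v < lengthWrt (R.s '' K) (v * R.s k) := by
    intro k hkSP
    by_contra hc
    push_neg at hc
    have hne := R.lengthWrt_mul_s_ne hSr hvS k (hSPsub hkSP)
    have hlt2 : lengthWrt (R.s '' K) (v * R.s k) < lengthWrt (R.s '' K) v := by omega
    -- v * s k is in A and shorter, contradiction
    have hvskS : v * R.s k ∈ Subgroup.closure (R.s '' K) :=
      mul_mem hvS (Subgroup.subset_closure (hSPsub hkSP))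
    have hinvw : (v * R.s k)⁻¹ * w = R.s k * u := by
      rw [mul_inv_rev, R.s_inv k, mul_assoc, hudef]
    have hskuSP : R.s k * u ∈ Subgroup.closure SP :=
      mul_mem (Subgroup.subset_closure hkSP) huSP
    have hup : lengthWrt SP (R.s k * u) ≤ 1 + lengthWrt SP u := by
      have h1 := lengthWrt_mul_le hSPinv (Subgroup.subset_closure hkSP) huSP
      have h2 : lengthWrt SP (R.s k) ≤ 1 := by
        have := lengthWrt_le_word (S := SP) [R.s k] (by
          intro z hz; simp only [List.mem_singleton] at hz; rw [hz]; exact hkSP)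
        simpa using this
      omega
    have hlow : n ≤ lengthWrt (R.s '' K) (v * R.s k) + lengthWrt SP (R.s k * u) := by
      have h1 : w = (v * R.s k) * (R.s k * u) := by
        rw [mul_assoc, ← mul_assoc (R.s k), R.s_sq k, one_mul, hvu]
      have h2 := lengthWrt_mul_le hinv hvskS
        ((Subgroup.closure_mono hSPsub) hskuSP)
      have h3 := lengthWrt_mono hSPinv hSPsub hskuSP
      calc n = lengthWrt (R.s '' K) w := hlen.symm
        _ = lengthWrt (R.s '' K) ((v * R.s k) * (R.s k * u)) := by rw [← h1]
        _ ≤ lengthWrt (R.s '' K) (v * R.s k) + lengthWrt (R.s '' K) (R.s k * u) := h2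
        _ ≤ lengthWrt (R.s '' K) (v * R.s k) + lengthWrt SP (R.s k * u) := by omega
    have hA' : v * R.s k ∈ A := by
      refine ⟨hvskS, by rw [hinvw]; exact hskuSP, ?_⟩
      have : lengthWrt (R.s '' K) (v * R.s k) + lengthWrt SP (R.s k * u) ≤ n := by
        calc lengthWrt (R.s '' K) (v * R.s k) + lengthWrt SP (R.s k * u)
            ≤ (lengthWrt (R.s '' K) v - 1) + (1 + lengthWrt SP u) := by omega
          _ ≤ lengthWrt (R.s '' K) v + lengthWrt SP u := by omega
          _ = n := hsum.symm
      rw [hinvw]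
      omega
    have := hmin _ hA'
    omega
  -- u is nontrivial, so v is shorter than w
  have hupos : 1 ≤ lengthWrt SP u := by
    by_contra hc
    push_neg at hc
    have hu1 : u = 1 := eq_one_of_lengthWrt_eq_zero hSPinv huSP (by omega)
    have hvw : v = w := by
      have := hvu; rw [hu1, mul_one] at this; exact this.symm
    have h1 := key j hsjSP
    rw [hvw] at h1
    omega
  have hvlt : lengthWrt (R.s '' K) v < n := by omega
  -- apply the induction hypothesis to v
  have hNNi : R.NN (v (R.α i)) :=
    IH _ hvlt v hvS rfl i hi (key i hsiSP)
  have hNNj : R.NN (v (R.α j)) :=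
    IH _ hvlt v hvS rfl j hjK (key j hsjSP)
  -- u * s i is not shorter than u in the dihedral group
  have husi : ¬ lengthWrt SP (u * R.s i) < lengthWrt SP u := by
    intro hc
    have h1 : w * R.s i = v * (u * R.s i) := by rw [hvu, mul_assoc]
    have h2 : lengthWrt (R.s '' K) (w * R.s i) ≤
        lengthWrt (R.s '' K) v + lengthWrt SP (u * R.s i) := by
      have husiSP : u * R.s i ∈ Subgroup.closure SP :=
        mul_mem huSP (Subgroup.subset_closure hsiSP)
      have h3 := lengthWrt_mul_le hinv hvS ((Subgroup.closure_mono hSPsub) husiSP)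
      have h4 := lengthWrt_mono hSPinv hSPsub husiSP
      rw [h1]
      omega
    rw [hlen] at hlt
    omega
  rcases R.dihedral_key hij huSP with ⟨p, q, hp, hq, hcomb⟩ | hshort
  · have hwαi : w (R.α i) = (p : ℂ) • v (R.α i) + (q : ℂ) • v (R.α j) := by
      have h1 : w (R.α i) = v (u (R.α i)) := by rw [hvu]; rfl
      rw [h1, hcomb, map_add, map_smul, map_smul]
    rw [hwαi]
    exact R.NN_add (R.NN_smul_real hp hNNi) (R.NN_smul_real hq hNNj)
  · exact absurd hshort husi

end RS

namespace RS

variable {I : Type*} [Fintype I] {H : Type*} [AddCommGroup H] [Module ℂ H] (R : RS I H)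

lemma NN_of_lt {K : Set I} {w : H ≃ₗ[ℂ] H} (hw : w ∈ Subgroup.closure (R.s '' K))
    {i : I} (hi : i ∈ K)
    (h : lengthWrt (R.s '' K) w < lengthWrt (R.s '' K) (w * R.s i)) :
    R.NN (w (R.α i)) :=
  R.NN_of_length_lt K _ w hw rfl i hi h

lemma NP_of_gt {K : Set I} {w : H ≃ₗ[ℂ] H} (hw : w ∈ Subgroup.closure (R.s '' K))
    {i : I} (hi : i ∈ K)
    (h : lengthWrt (R.s '' K) (w * R.s i) < lengthWrt (R.s '' K) w) :
    R.NP (w (R.α i)) := by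
  have hw' : w * R.s i ∈ Subgroup.closure (R.s '' K) :=
    mul_mem hw (Subgroup.subset_closure ⟨i, hi, rfl⟩)
  have hws : (w * R.s i) * R.s i = w := by rw [mul_assoc, R.s_sq i, mul_one]
  have hNN : R.NN ((w * R.s i) (R.α i)) := by
    apply R.NN_of_lt hw' hi
    rw [hws]
    exact h
  have he : w (R.α i) = -((w * R.s i) (R.α i)) := by
    conv_lhs => rw [← hws]
    have h1 : ((w * R.s i) * R.s i) (R.α i) = (w * R.s i) (R.s i (R.α i)) := rfl
    rw [h1, R.s_apply_self i, map_neg]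
  rw [he]
  exact R.NP_neg_of_NN hNN

lemma NN_or_NP_apply {K : Set I} {w : H ≃ₗ[ℂ] H} (hw : w ∈ Subgroup.closure (R.s '' K))
    {i : I} (hi : i ∈ K) : R.NN (w (R.α i)) ∨ R.NP (w (R.α i)) := by
  have hne := R.lengthWrt_mul_s_ne (R.s_image_subset_range K) hw i ⟨i, hi, rfl⟩
  rcases Nat.lt_or_ge (lengthWrt (R.s '' K) w) (lengthWrt (R.s '' K) (w * R.s i)) with h | h
  · exact Or.inl (R.NN_of_lt hw hi h)
  · exact Or.inr (R.NP_of_gt hw hi (by omega))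

lemma root_NN_or_NP {K : Set I} {β : H} (hβ : β ∈ R.roots K) : R.NN β ∨ R.NP β := by
  obtain ⟨w, hw, i, hi, rfl⟩ := hβ
  exact R.NN_or_NP_apply hw hi

lemma lt_of_NN {K : Set I} {w : H ≃ₗ[ℂ] H} (hw : w ∈ Subgroup.closure (R.s '' K))
    {i : I} (hi : i ∈ K) (h : R.NN (w (R.α i))) :
    lengthWrt (R.s '' K) w < lengthWrt (R.s '' K) (w * R.s i) := by
  have hne := R.lengthWrt_mul_s_ne (R.s_image_subset_range K) hw i ⟨i, hi, rfl⟩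
  by_contra hc
  have h2 : lengthWrt (R.s '' K) (w * R.s i) < lengthWrt (R.s '' K) w := by omega
  have hNP := R.NP_of_gt hw hi h2
  have h0 := R.eq_zero_of_NN_NP h hNP
  exact R.alpha_ne_zero i (by simpa using h0)

lemma exists_NP_of_ne_one {K : Set I} {w : H ≃ₗ[ℂ] H}
    (hw : w ∈ Subgroup.closure (R.s '' K)) (hne : w ≠ 1) :
    ∃ i ∈ K, R.NP (w (R.α i)) := by
  have hinv := R.s_mem_involutive (R.s_image_subset_range K)
  obtain ⟨l, hl, hllen, hlp⟩ := exists_reduced_word hinv hw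
  have hlne : l ≠ [] := by
    intro h
    apply hne
    rw [← hlp, h, List.prod_nil]
  obtain ⟨j, hjK, hjlast⟩ : ∃ j ∈ K, l.getLast hlne = R.s j := by
    obtain ⟨j, hjK, hje⟩ := hl _ (List.getLast_mem hlne)
    exact ⟨j, hjK, hje.symm⟩
  refine ⟨j, hjK, R.NP_of_gt hw hjK ?_⟩
  have hwsj : w * R.s j = l.dropLast.prod := by
    have h1 : w = l.dropLast.prod * R.s j := by
      rw [← hlp]
      conv_lhs => rw [(by rw [← hjlast]; exact (List.dropLast_append_getLast hlne).symm :
        l = l.dropLast ++ [R.s j])]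
      rw [List.prod_append, List.prod_singleton]
    rw [h1, mul_assoc, R.s_sq j, mul_one]
  have h1 : lengthWrt (R.s '' K) (w * R.s j) ≤ l.length - 1 := by
    rw [hwsj]
    have := lengthWrt_le_word (S := R.s '' K) l.dropLast
      (fun x hx => hl x (List.mem_of_mem_dropLast hx))
    simpa [List.length_dropLast] using this
  have h2 : 1 ≤ l.length := by
    rcases Nat.eq_zero_or_pos l.length with h | h
    · exact absurd (List.length_eq_zero_iff.mp h) hlne
    · omega
  omega

lemma eq_one_of_all_NN {K : Set I} {w : H ≃ₗ[ℂ] H}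
    (hw : w ∈ Subgroup.closure (R.s '' K)) (h : ∀ i ∈ K, R.NN (w (R.α i))) :
    w = 1 := by
  by_contra hne
  obtain ⟨i, hi, hNP⟩ := R.exists_NP_of_ne_one hw hne
  have h0 := R.eq_zero_of_NN_NP (h i hi) hNP
  exact R.alpha_ne_zero i (by simpa using h0)

/-! ### anti-dominant elements -/

def AntiDom (K : Set I) (w : H ≃ₗ[ℂ] H) : Prop := ∀ i ∈ K, R.NP (w (R.α i))

lemma NP_apply_of_antidom {K : Set I} {w : H ≃ₗ[ℂ] H} (hAD : R.AntiDom K w)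
    {β : H} (hNN : R.NN β) (hsupp : R.Supp K β) : R.NP (w β) := by
  apply R.NP_apply w hNN
  intro k hk
  by_cases hkK : k ∈ K
  · exact hAD k hkK
  · exact absurd (hsupp k hkK) hk

lemma antidom_unique {K : Set I} {u w : H ≃ₗ[ℂ] H}
    (hu : u ∈ Subgroup.closure (R.s '' K)) (hw : w ∈ Subgroup.closure (R.s '' K))
    (hADu : R.AntiDom K u) (hADw : R.AntiDom K w) : u = w := by
  have hx : u⁻¹ * w ∈ Subgroup.closure (R.s '' K) := mul_mem (inv_mem hu) hw
  have hall : ∀ i ∈ K, R.NN ((u⁻¹ * w) (R.α i)) := by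
    intro i hi
    rcases R.NN_or_NP_apply hx hi with h | h
    · exact h
    · exfalso
      set x : H ≃ₗ[ℂ] H := u⁻¹ * w with hxdef
      have hδroot : -(x (R.α i)) ∈ R.roots K :=
        R.roots_neg_mem (R.roots_apply_mem hx (R.alpha_mem_roots hi))
      have hδNN : R.NN (-(x (R.α i))) := R.NN_neg_of_NP h
      have hδsupp : R.Supp K (-(x (R.α i))) := R.roots_supp hδroot
      have hNPuδ : R.NP (u (-(x (R.α i)))) := R.NP_apply_of_antidom hADu hδNN hδsupp
      have huxw : u (x (R.α i)) = w (R.α i) := by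
        have h1 : u (x (R.α i)) = (u * x) (R.α i) := rfl
        rw [h1, hxdef, ← mul_assoc, mul_inv_cancel, one_mul]
      have h2 : u (-(x (R.α i))) = -(w (R.α i)) := by rw [map_neg, huxw]
      rw [h2] at hNPuδ
      have hNNw : R.NN (w (R.α i)) := by
        have := R.NN_neg_of_NP hNPuδ
        rwa [neg_neg] at this
      have h0 := R.eq_zero_of_NN_NP hNNw (hADw i hi)
      exact R.roots_ne_zero (R.roots_apply_mem hw (R.alpha_mem_roots hi)) h0
  have h1 : u⁻¹ * w = 1 := R.eq_one_of_all_NN hx hall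
  have := congrArg (fun z => u * z) h1
  simpa [← mul_assoc, mul_inv_cancel] using this.symm

lemma antidom_inv {K : Set I} {w : H ≃ₗ[ℂ] H}
    (hw : w ∈ Subgroup.closure (R.s '' K)) (hAD : R.AntiDom K w) :
    R.AntiDom K w⁻¹ := by
  intro i hi
  rcases R.NN_or_NP_apply (inv_mem hw) hi with h | h
  · exfalso
    have hδroot : w⁻¹ (R.α i) ∈ R.roots K :=
      R.roots_apply_mem (inv_mem hw) (R.alpha_mem_roots hi)
    have hNP : R.NP (w (w⁻¹ (R.α i))) :=
      R.NP_apply_of_antidom hAD h (R.roots_supp hδroot)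
    have he : w (w⁻¹ (R.α i)) = R.α i := by
      have h1 : w (w⁻¹ (R.α i)) = (w * w⁻¹) (R.α i) := rfl
      rw [h1, mul_inv_cancel]; rfl
    rw [he] at hNP
    exact R.alpha_ne_zero i (R.eq_zero_of_NN_NP (R.NN_alpha i) hNP)
  · exact h

lemma antidom_sq {K : Set I} {w : H ≃ₗ[ℂ] H}
    (hw : w ∈ Subgroup.closure (R.s '' K)) (hAD : R.AntiDom K w) :
    w * w = 1 := by
  have h1 : w⁻¹ = w := R.antidom_unique (inv_mem hw) hw (R.antidom_inv hw hAD) hAD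
  nth_rewrite 1 [← h1]
  rw [inv_mul_cancel]

/-! ### inversion sets -/

def Ninv (K : Set I) (w : H ≃ₗ[ℂ] H) : Set H :=
  {β | β ∈ R.roots K ∧ R.NN β ∧ R.NP (w β)}

lemma Ninv_nonempty_of_ne_one {K : Set I} {w : H ≃ₗ[ℂ] H}
    (hw : w ∈ Subgroup.closure (R.s '' K)) (hne : w ≠ 1) :
    (R.Ninv K w).Nonempty := by
  obtain ⟨i, hi, hNP⟩ := R.exists_NP_of_ne_one hw hne
  exact ⟨R.α i, R.alpha_mem_roots hi, R.NN_alpha i, hNP⟩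

/-- The Steinberg decrement: multiplying an element that is anti-dominant on `K` by the
longest element of `W_K` strictly decreases the inversion number. -/
lemma ninv_decrement {K K' : Set I} (hKK' : K ⊆ K') {w w0 : H ≃ₗ[ℂ] H}
    (hw : w ∈ Subgroup.closure (R.s '' K'))
    (hw0 : w0 ∈ Subgroup.closure (R.s '' K))
    (hADw : R.AntiDom K w) (hADw0 : R.AntiDom K w0)
    {i₀ : I} (hi₀ : i₀ ∈ K)
    (hfin : (R.roots K').Finite) :
    (R.Ninv K' (w * w0)).ncard < (R.Ninv K' w).ncard := by
  classical
  have hw0' : w0 ∈ Subgroup.closure (R.s '' K') :=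
    Subgroup.closure_mono (Set.image_mono hKK') hw0
  have hsq : w0 * w0 = 1 := R.antidom_sq hw0 hADw0
  -- (a) supported roots
  have ha : ∀ β, β ∈ R.roots K' → R.NN β → R.Supp K β →
      β ∈ R.Ninv K' w ∧ β ∉ R.Ninv K' (w * w0) := by
    intro β hβ hNN hsupp
    have hNPw : R.NP (w β) := R.NP_apply_of_antidom hADw hNN hsupp
    refine ⟨⟨hβ, hNN, hNPw⟩, ?_⟩
    intro ⟨_, _, hNP'⟩
    -- w0 β is NP and supported in K; w(-w0 β) is NP so (w*w0) β is NN; contradiction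
    have hNPw0 : R.NP (w0 β) := R.NP_apply_of_antidom hADw0 hNN hsupp
    have hsupp0 : R.Supp K (w0 β) := by
      have h1 := R.Supp_apply_sub hw0 β
      have h2 := R.Supp_add h1 hsupp
      have e : w0 β = (w0 β - β) + β := by abel
      rwa [← e] at h2
    have hNN0 : R.NN (-(w0 β)) := R.NN_neg_of_NP hNPw0
    have hNP1 : R.NP (w (-(w0 β))) :=
      R.NP_apply_of_antidom hADw hNN0 (R.Supp_neg hsupp0)
    have he : (w * w0) β = -(w (-(w0 β))) := by
      have h1 : (w * w0) β = w (w0 β) := rfl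
      rw [h1, map_neg, neg_neg]
    have hNN1 : R.NN ((w * w0) β) := by
      rw [he]; exact R.NN_neg_of_NP hNP1
    have h0 := R.eq_zero_of_NN_NP hNN1 hNP'
    have hβ0 : β = 0 := by
      have := congrArg (fun v => (w * w0).symm v) h0
      simpa using this
    exact R.roots_ne_zero hβ hβ0
  -- (b) unsupported roots
  have hb : ∀ β, β ∈ R.roots K' → R.NN β → ¬ R.Supp K β →
      w0 β ∈ R.roots K' ∧ R.NN (w0 β) ∧ ¬ R.Supp K (w0 β) := by
    intro β hβ hNN hnsupp
    have hroot0 : w0 β ∈ R.roots K' := R.roots_apply_mem hw0' hβ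
    obtain ⟨k, hkK, hk0⟩ : ∃ k, k ∉ K ∧ R.α.repr β k ≠ 0 := by
      by_contra hc
      push_neg at hc
      exact hnsupp (fun k hk => hc k hk)
    have hco : R.α.repr (w0 β) k = R.α.repr β k := by
      have h1 := R.Supp_apply_sub hw0 β
      have h2 := h1 k hkK
      have h3 : R.α.repr (w0 β - β) k = R.α.repr (w0 β) k - R.α.repr β k := by
        rw [map_sub]; rfl
      rw [h3] at h2
      exact sub_eq_zero.mp h2
    have hNN0 : R.NN (w0 β) := by
      rcases R.root_NN_or_NP hroot0 with h | h
      · exact h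
      · exfalso
        have h1 := (hNN k).1
        have h2 := (hNN k).2
        have h3 := (h k).1
        rw [hco] at h3
        apply hk0
        apply Complex.ext
        · simpa using le_antisymm h3 h1
        · simpa using h2
    refine ⟨hroot0, hNN0, ?_⟩
    intro hsupp0
    exact hk0 (hco ▸ hsupp0 k hkK)
  -- the image identity
  set U : Set H := {β | β ∈ R.Ninv K' w ∧ ¬ R.Supp K β} with hUdef
  have himg : R.Ninv K' (w * w0) = w0 '' U := by
    ext γ
    constructor
    · rintro ⟨hγroot, hγNN, hγNP⟩
      have hnsupp : ¬ R.Supp K γ := by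
        intro hsupp
        exact (ha γ hγroot hγNN hsupp).2 ⟨hγroot, hγNN, hγNP⟩
      obtain ⟨hroot0, hNN0, hnsupp0⟩ := hb γ hγroot hγNN hnsupp
      refine ⟨w0 γ, ⟨⟨hroot0, hNN0, hγNP⟩, hnsupp0⟩, ?_⟩
      have h1 : w0 (w0 γ) = (w0 * w0) γ := rfl
      rw [h1, hsq]; rfl
    · rintro ⟨δ, ⟨⟨hδroot, hδNN, hδNP⟩, hδnsupp⟩, rfl⟩
      obtain ⟨hroot0, hNN0, _⟩ := hb δ hδroot hδNN hδnsupp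
      refine ⟨hroot0, hNN0, ?_⟩
      have h1 : (w * w0) (w0 δ) = w ((w0 * w0) δ) := rfl
      rw [h1, hsq]
      exact hδNP
  -- counting
  set NS : Set H := {β | β ∈ R.Ninv K' w ∧ R.Supp K β} with hNSdef
  have hNfin : (R.Ninv K' w).Finite := hfin.subset (fun β hβ => hβ.1)
  have hUfin : U.Finite := hNfin.subset (fun β hβ => hβ.1)
  have hSfin : (NS).Finite :=
    hNfin.subset (fun β hβ => hβ.1)
  have hcard1 : (R.Ninv K' (w * w0)).ncard = U.ncard := by
    rw [himg]
    exact Set.ncard_image_of_injective U w0.injective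
  have hsplit : R.Ninv K' w = U ∪ NS := by
    ext β
    constructor
    · intro hβ
      by_cases h : R.Supp K β
      · exact Or.inr ⟨hβ, h⟩
      · exact Or.inl ⟨hβ, h⟩
    · rintro (⟨h, _⟩ | ⟨h, _⟩) <;> exact h
  have hdisj : Disjoint U NS := by
    rw [Set.disjoint_left]
    rintro β ⟨_, hn⟩ ⟨_, hy⟩
    exact hn hy
  have hcard2 : (R.Ninv K' w).ncard = U.ncard + NS.ncard := by
    rw [hsplit]
    exact Set.ncard_union_eq hdisj hUfin hSfin
  have hmem : R.α i₀ ∈ NS := by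
    refine ⟨⟨R.alpha_mem_roots (hKK' hi₀), R.NN_alpha i₀, hADw i₀ hi₀⟩, R.Supp_alpha hi₀⟩
  have hpos : 0 < NS.ncard :=
    (Set.ncard_pos hSfin).mpr ⟨_, hmem⟩
  omega

end RS

lemma hom_mem_closure {Γ Γ' : Type*} [Group Γ] [Group Γ'] (f : Γ →* Γ') {S : Set Γ}
    {T : Set Γ'} (hS : ∀ x ∈ S, x * x = 1) (h : ∀ x ∈ S, f x ∈ T) {u : Γ}
    (hu : u ∈ Subgroup.closure S) : f u ∈ Subgroup.closure T := by
  obtain ⟨l, hl, hp⟩ := word_of_mem_closure hS hu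
  rw [← hp, map_list_prod]
  apply list_prod_mem
  intro x hx
  obtain ⟨y, hy, rfl⟩ := List.mem_map.mp hx
  exact Subgroup.subset_closure (h y (hl y hy))


/-- Let `Ŵ` be the Weyl group of a simply laced root system with a finite
group `G` acting freely by diagram automorphisms, `J = I/G` the set of orbits of nodes, and for
each orbit `j` let `w0 j` be the longest element of the parabolic subgroup `Ŵⱼ` generated by
`{s i : i ∈ j}`.  Given a subset `J' ⊆ J`, with `I' = ⋃_{j ∈ J'} j` and `Ŵ'` the parabolic
subgroup of `Ŵ` generated by `{s i : i ∈ I'}`, we have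
`Ŵ' ∩ Ŵ^G = ⟨w0 j : j ∈ J'⟩`. -/
theorem stmt1
    {I : Type*} [Fintype I] {H : Type*} [AddCommGroup H] [Module ℂ H]
    (α : Module.Basis I ℂ H)
    (B : LinearMap.BilinForm ℂ H)
    (hBsymm : ∀ x y : H, B x y = B y x)
    (hdiag : ∀ i, B (α i) (α i) = 2)
    (hoff : ∀ i j, i ≠ j → B (α i) (α j) = 0 ∨ B (α i) (α j) = -1)
    (s : I → (H ≃ₗ[ℂ] H))
    (hs : ∀ i x, s i x = x - B x (α i) • α i)
    (What : Subgroup (H ≃ₗ[ℂ] H))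
    (hWhat : What = Subgroup.closure (Set.range s))
    (hfin : Finite What)
    {G : Type*} [Group G] [Finite G] [MulAction G I]
    (hfree : ∀ g : G, g ≠ 1 → ∀ i : I, g • i ≠ i)       -- G acts freely on the diagram
    (P : G →* (H ≃ₗ[ℂ] H))
    (hP : ∀ (g : G) (i : I), P g (α i) = α (g • i))
    (hconj : ∀ (g : G) (i : I), P g * s i * (P g)⁻¹ = s (g • i))
    -- `w0 j` is the longest element of the parabolic subgroup `Ŵⱼ = ⟨s i : i ∈ j⟩`:
    (w0 : Quotient (MulAction.orbitRel G I) → (H ≃ₗ[ℂ] H))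
    (hw0 : ∀ j : Quotient (MulAction.orbitRel G I),
      w0 j ∈ Subgroup.closure
          {x | ∃ i : I, Quotient.mk (MulAction.orbitRel G I) i = j ∧ x = s i} ∧
      ∀ u ∈ Subgroup.closure
          {x | ∃ i : I, Quotient.mk (MulAction.orbitRel G I) i = j ∧ x = s i},
        lengthWrt {x | ∃ i : I, Quotient.mk (MulAction.orbitRel G I) i = j ∧ x = s i} u ≤
          lengthWrt {x | ∃ i : I, Quotient.mk (MulAction.orbitRel G I) i = j ∧ x = s i} (w0 j))
    (J' : Set (Quotient (MulAction.orbitRel G I))) :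
    {w : H ≃ₗ[ℂ] H |
        w ∈ Subgroup.closure
            {x | ∃ i : I, Quotient.mk (MulAction.orbitRel G I) i ∈ J' ∧ x = s i} ∧
        ∀ g : G, P g * w * (P g)⁻¹ = w} =
      ↑(Subgroup.closure {x | ∃ j ∈ J', x = w0 j}) := by
  classical
  set R : RS I H := ⟨α, B, hBsymm, hdiag, hoff, s, hs⟩ with hRdef
  have hRs : R.s = s := rfl
  have hRα : R.α = α := rfl
  -- orbit sets
  set Kj : Quotient (MulAction.orbitRel G I) → Set I :=
    fun j => {i | Quotient.mk (MulAction.orbitRel G I) i = j} with hKjdef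
  set K' : Set I := {i | Quotient.mk (MulAction.orbitRel G I) i ∈ J'} with hK'def
  have hSj : ∀ j, {x | ∃ i : I, Quotient.mk (MulAction.orbitRel G I) i = j ∧ x = s i} =
      R.s '' (Kj j) := by
    intro j
    ext x
    constructor
    · rintro ⟨i, hi, rfl⟩; exact ⟨i, hi, rfl⟩
    · rintro ⟨i, hi, rfl⟩; exact ⟨i, hi, rfl⟩
  have hS' : {x | ∃ i : I, Quotient.mk (MulAction.orbitRel G I) i ∈ J' ∧ x = s i} =
      R.s '' K' := by
    ext x
    constructor
    · rintro ⟨i, hi, rfl⟩; exact ⟨i, hi, rfl⟩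
    · rintro ⟨i, hi, rfl⟩; exact ⟨i, hi, rfl⟩
  have hKjK' : ∀ j ∈ J', Kj j ⊆ K' := by
    intro j hj i hi
    rw [hKjdef] at hi
    show Quotient.mk (MulAction.orbitRel G I) i ∈ J'
    rw [Set.mem_setOf_eq] at hi
    rw [hi]
    exact hj
  have hsmul_mem_Kj : ∀ (g : G) (i : I) (j), i ∈ Kj j → g • i ∈ Kj j := by
    intro g i j hi
    rw [hKjdef] at hi ⊢
    rw [← hi]
    exact Quotient.sound (MulAction.mem_orbit_iff.mpr ⟨g, rfl⟩)
  -- finiteness of the relevant root system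
  have hWhatfin : ((What : Set (H ≃ₗ[ℂ] H))).Finite := Set.toFinite _
  have hWfin : ((Subgroup.closure (R.s '' K') : Subgroup (H ≃ₗ[ℂ] H)) :
      Set (H ≃ₗ[ℂ] H)).Finite := by
    apply hWhatfin.subset
    intro x hx
    rw [hWhat]
    exact Subgroup.closure_mono (by rw [hRs]; exact fun z ⟨k, _, hk⟩ => ⟨k, hk⟩) hx
  have hrootsfin : (R.roots K').Finite := by
    apply (Set.Finite.image2 (fun (w : H ≃ₗ[ℂ] H) i => w (R.α i)) hWfin
      (Set.finite_univ (α := I))).subset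
    rintro v ⟨w, hw, i, _, rfl⟩
    exact Set.mem_image2_of_mem hw (Set.mem_univ i)
  -- coordinates of P g
  have hPrepr : ∀ (g : G) (v : H) (m : I), R.α.repr (P g v) m = R.α.repr v (g⁻¹ • m) := by
    intro g v m
    have h1 : P g v = ∑ k, R.α.repr v k • R.α (g • k) := by
      conv_lhs => rw [← R.α.sum_repr v]
      rw [map_sum]
      simp only [map_smul, hRα, hP]
    rw [h1, map_sum, Finsupp.finset_sum_apply]
    have h2 : ∀ k, (R.α.repr (R.α.repr v k • R.α (g • k))) m =
        if g • k = m then R.α.repr v k else 0 := by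
      intro k
      rw [map_smul, Module.Basis.repr_self, Finsupp.smul_single, smul_eq_mul, mul_one,
        Finsupp.single_apply]
    rw [Finset.sum_congr rfl (fun k _ => h2 k)]
    rw [Finset.sum_eq_single (g⁻¹ • m)]
    · rw [if_pos (smul_inv_smul g m)]
    · intro k _ hk
      rw [if_neg]
      intro h
      exact hk (by rw [← h, inv_smul_smul])
    · intro h
      exact absurd (Finset.mem_univ _) h
  have hNP_P : ∀ (g : G) {v : H}, R.NP v → R.NP (P g v) := by
    intro g v h m
    rw [hPrepr g v m]
    exact h (g⁻¹ • m)
  -- conjugation homomorphism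
  have conjHom : ∀ c : H ≃ₗ[ℂ] H, ∃ f : (H ≃ₗ[ℂ] H) →* (H ≃ₗ[ℂ] H),
      ∀ x, f x = c * x * c⁻¹ := by
    intro c
    refine ⟨⟨⟨fun x => c * x * c⁻¹, by group⟩, by intro a b; group⟩, fun x => rfl⟩
  -- properties of w0 j
  have hw0cl : ∀ j, w0 j ∈ Subgroup.closure (R.s '' Kj j) := by
    intro j
    have := (hw0 j).1
    rwa [hSj j] at this
  have hw0AD : ∀ j, R.AntiDom (Kj j) (w0 j) := by
    intro j i hi
    rcases R.NN_or_NP_apply (hw0cl j) hi with h | h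
    · exfalso
      have hlt := R.lt_of_NN (hw0cl j) hi h
      have hmax := (hw0 j).2
      rw [hSj j] at hmax
      have hmem : w0 j * R.s i ∈ Subgroup.closure (R.s '' Kj j) :=
        mul_mem (hw0cl j) (Subgroup.subset_closure ⟨i, hi, rfl⟩)
      have := hmax _ hmem
      omega
    · exact h
  have hw0fix : ∀ j (g : G), P g * w0 j * (P g)⁻¹ = w0 j := by
    intro j g
    obtain ⟨f, hf⟩ := conjHom (P g)
    have hmem : f (w0 j) ∈ Subgroup.closure (R.s '' Kj j) := by
      apply hom_mem_closure f (R.s_mem_involutive (R.s_image_subset_range _))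
        _ (hw0cl j)
      rintro x ⟨i, hi, rfl⟩
      rw [hf, hRs, hconj g i]
      exact ⟨g • i, hsmul_mem_Kj g i j hi, rfl⟩
    have hAD : R.AntiDom (Kj j) (f (w0 j)) := by
      intro i hi
      rw [hf]
      have hginv : g⁻¹ • i ∈ Kj j := hsmul_mem_Kj g⁻¹ i j hi
      have e1 : (P g * w0 j * (P g)⁻¹) (R.α i) = P g (w0 j ((P g)⁻¹ (R.α i))) := rfl
      have e2 : (P g)⁻¹ (R.α i) = R.α (g⁻¹ • i) := by
        rw [← map_inv P g, hRα, hP g⁻¹ i]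
      rw [e1, e2]
      exact hNP_P g (hw0AD j _ hginv)
    have := R.antidom_unique hmem (hw0cl j) hAD (hw0AD j)
    rw [hf] at this
    exact this
  have hw0sq : ∀ j, w0 j * w0 j = 1 := fun j => R.antidom_sq (hw0cl j) (hw0AD j)
  -- the subgroup of G-fixed points
  set Z : Subgroup (H ≃ₗ[ℂ] H) := Subgroup.closure {x | ∃ j ∈ J', x = w0 j} with hZdef
  -- main induction: every G-fixed element of W' lies in Z
  have main : ∀ n : ℕ, ∀ w : H ≃ₗ[ℂ] H, w ∈ Subgroup.closure (R.s '' K') →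
      (∀ g : G, P g * w * (P g)⁻¹ = w) → (R.Ninv K' w).ncard = n → w ∈ Z := by
    intro n
    induction n using Nat.strong_induction_on with
    | _ n IH =>
    intro w hw hfix hcard
    by_cases hone : w = 1
    · rw [hone]; exact Subgroup.one_mem Z
    obtain ⟨i, hi, hNP⟩ := R.exists_NP_of_ne_one hw hone
    set j : Quotient (MulAction.orbitRel G I) := Quotient.mk (MulAction.orbitRel G I) i
      with hjdef
    have hjJ' : j ∈ J' := hi
    have hiKj : i ∈ Kj j := rfl
    have hcommP : ∀ g : G, P g * w = w * P g := by
      intro g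
      conv_rhs => rw [← hfix g]
      group
    have hADw : R.AntiDom (Kj j) w := by
      intro i' hi'
      have hrel : i' ∈ MulAction.orbit G i := Quotient.exact (hi'.trans hjdef)
      obtain ⟨g, hg⟩ := hrel
      have hg' : g • i = i' := hg
      have e1 : R.α i' = P g (R.α i) := by
        rw [hRα, hP g i, hg']
      rw [e1]
      have e2 : w (P g (R.α i)) = P g (w (R.α i)) := by
        have h1 : w (P g (R.α i)) = (w * P g) (R.α i) := rfl
        have h2 : P g (w (R.α i)) = (P g * w) (R.α i) := rfl
        rw [h1, h2, hcommP g]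
      rw [e2]
      exact hNP_P g hNP
    have hdec := R.ninv_decrement (hKjK' j hjJ') hw (hw0cl j) hADw (hw0AD j)
      hiKj hrootsfin
    have hww0mem : w * w0 j ∈ Subgroup.closure (R.s '' K') :=
      mul_mem hw (Subgroup.closure_mono (Set.image_mono (hKjK' j hjJ')) (hw0cl j))
    have hww0fix : ∀ g : G, P g * (w * w0 j) * (P g)⁻¹ = w * w0 j := by
      intro g
      have h1 : P g * (w * w0 j) * (P g)⁻¹ =
          (P g * w * (P g)⁻¹) * (P g * w0 j * (P g)⁻¹) := by group
      rw [h1, hfix g, hw0fix j g]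
    have hmem' : w * w0 j ∈ Z := by
      rw [hcard] at hdec
      exact IH _ hdec (w * w0 j) hww0mem hww0fix rfl
    have hw0Z : w0 j ∈ Z := Subgroup.subset_closure ⟨j, hjJ', rfl⟩
    have he : w = (w * w0 j) * w0 j := by
      rw [mul_assoc, hw0sq j, mul_one]
    rw [he]
    exact mul_mem hmem' hw0Z
  -- reverse inclusion: Z is contained in the fixed subgroup of W'
  have hrev : ∀ w : H ≃ₗ[ℂ] H, w ∈ Z →
      w ∈ Subgroup.closure (R.s '' K') ∧ ∀ g : G, P g * w * (P g)⁻¹ = w := by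
    have hFix : ∃ F : Subgroup (H ≃ₗ[ℂ] H),
        ∀ w, w ∈ F ↔ w ∈ Subgroup.closure (R.s '' K') ∧
          ∀ g : G, P g * w * (P g)⁻¹ = w := by
      refine ⟨{
        carrier := {w | w ∈ Subgroup.closure (R.s '' K') ∧
          ∀ g : G, P g * w * (P g)⁻¹ = w}
        one_mem' := ⟨Subgroup.one_mem _, by intro g; group⟩
        mul_mem' := by
          rintro a b ⟨haW, ha⟩ ⟨hbW, hb⟩
          refine ⟨mul_mem haW hbW, fun g => ?_⟩
          have h1 : P g * (a * b) * (P g)⁻¹ =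
              (P g * a * (P g)⁻¹) * (P g * b * (P g)⁻¹) := by group
          rw [h1, ha g, hb g]
        inv_mem' := by
          rintro a ⟨haW, ha⟩
          refine ⟨inv_mem haW, fun g => ?_⟩
          have h1 : P g * a⁻¹ * (P g)⁻¹ = (P g * a * (P g)⁻¹)⁻¹ := by group
          rw [h1, ha g]}, fun w => Iff.rfl⟩
    obtain ⟨F, hF⟩ := hFix
    intro w hwZ
    rw [← hF]
    revert w
    rw [← SetLike.le_def, hZdef]
    apply Subgroup.closure_le F |>.mpr
    rintro x ⟨j, hj, rfl⟩
    rw [SetLike.mem_coe, hF]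
    constructor
    · exact Subgroup.closure_mono (Set.image_mono (hKjK' j hj)) (hw0cl j)
    · exact fun g => hw0fix j g
  -- final set equality
  ext w
  simp only [Set.mem_setOf_eq, SetLike.mem_coe]
  constructor
  · rintro ⟨hwW, hwfix⟩
    rw [hS'] at hwW
    exact main _ w hwW hwfix rfl
  · intro hz
    obtain ⟨h1, h2⟩ := hrev w hz
    rw [hS']
    exact ⟨h1, h2⟩
end
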